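/- Let n_1, n_2 be nonnegative integers, n = n_1 + n_2, λ1 a special symplectic partition of 2n_1 and λ2 a special orthogonal partition of 2n_2. Then d(λ1) ∪ d(λ2) ≤ d(ind(λ1,λ2)) in the dominance order on partitions of 2n+1. (Here ind(λ1,λ2) is a symplectic partition of 2n, d(λ1) is an orthogonal partition of 2n_1+1, d(λ2) an orthogonal partition of 2n_2, and d(ind(λ1,λ2)) an orthogonal partition of 2n+1.) -/

import Mathlib

open Classical

namespace Wald

/-- `S f k = λ_1 + … + λ_k` (partitions are indexed from 1; index 0 is unused). -/
def S (f : ℕ → ℕ) (k : ℕ) : ℕ := ∑ j ∈ Finset.Icc 1 k, f j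

/-- `f` represents a partition of `N`: nonincreasing on indices `≥ 1`,
finitely many nonzero terms, with total sum `N`. -/
structure IsPartition (f : ℕ → ℕ) (N : ℕ) : Prop where
  mono : ∀ ⦃j k : ℕ⦄, 1 ≤ j → j ≤ k → f k ≤ f j
  fin : ∃ m, ∀ j, m < j → f j = 0
  total : ∀ m, (∀ j, m < j → f j = 0) → S f m = N

/-- multiplicity of `i` as a term of the partition -/
noncomputable def mult (f : ℕ → ℕ) (i : ℕ) : ℕ := Set.ncard {j : ℕ | 1 ≤ j ∧ f j = i}

/-- dominance order: `Dom f g ↔ f ≤ g` -/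
def Dom (f g : ℕ → ℕ) : Prop := ∀ k, S f k ≤ S g k

/-- transposed partition: `(transpose f) j = #{i ≥ 1 : f i ≥ j}` for `j ≥ 1` -/
noncomputable def transpose (f : ℕ → ℕ) : ℕ → ℕ :=
  fun j => Set.ncard {i : ℕ | 1 ≤ i ∧ 1 ≤ j ∧ j ≤ f i}

/-- union of two partitions (all terms listed together in nonincreasing order);
it is characterized by `transpose (unionP f g) = transpose f + transpose g`. -/
noncomputable def unionP (f g : ℕ → ℕ) : ℕ → ℕ :=
  transpose (fun j => transpose f j + transpose g j)

/-- the partition `(1)` -/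
def one1 : ℕ → ℕ := fun j => if j = 1 then 1 else 0

/-- symplectic partition: every odd `i ≥ 1` has even multiplicity -/
def Symp (f : ℕ → ℕ) : Prop := ∀ i, Odd i → Even (mult f i)

/-- orthogonal partition: every even `i ≥ 2` has even multiplicity -/
def Orth (f : ℕ → ℕ) : Prop := ∀ i, Even i → 1 ≤ i → Even (mult f i)

/-- `λ_{2j-1} ≡ λ_{2j} (mod 2)` for all `j ≥ 1` (speciality for symplectic
partitions of `2n` and orthogonal partitions of `2n`). -/
def SpecialPairs (f : ℕ → ℕ) : Prop := ∀ j, 1 ≤ j → f (2*j - 1) % 2 = f (2*j) % 2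

/-- speciality for orthogonal partitions of `2n+1`: `λ_1` odd and
`λ_{2j} ≡ λ_{2j+1} (mod 2)` for all `j ≥ 1`. -/
def SpecialOrthOdd (f : ℕ → ℕ) : Prop :=
  Odd (f 1) ∧ ∀ j, 1 ≤ j → f (2*j) % 2 = f (2*j + 1) % 2

/-- `Jord_bp` for symplectic partitions: even `i ≥ 2` with positive multiplicity -/
def JordbpS (f : ℕ → ℕ) : Set ℕ := {i | Even i ∧ 2 ≤ i ∧ 1 ≤ mult f i}

/-- `Jord_bp` for orthogonal partitions: odd `i ≥ 1` with positive multiplicity -/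
def JordbpO (f : ℕ → ℕ) : Set ℕ := {i | Odd i ∧ 1 ≤ mult f i}

/-- the set `{i_1 > … > i_m}` of terms with odd multiplicity -/
def OddSet (f : ℕ → ℕ) : Set ℕ := {i | Odd (mult f i)}

/-- for special symplectic partitions: `{i_1 > … > i_{m'}}`, with `0` added if `m` is odd -/
def Dsymp (f : ℕ → ℕ) : Set ℕ :=
  {i | Odd (mult f i) ∨ (i = 0 ∧ Odd (OddSet f).ncard)}

/-- `a = i_{2h-1}` and `b = i_{2h}` for some `h`: consecutive elements of `Dsymp f`
with an even number of elements of `Dsymp f` above `a`. -/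
def PairedS (f : ℕ → ℕ) (a b : ℕ) : Prop :=
  b < a ∧ a ∈ Dsymp f ∧ b ∈ Dsymp f ∧ Even ((Dsymp f ∩ Set.Ioi a).ncard) ∧
    Dsymp f ∩ Set.Ioo b a = ∅

/-- intervals of a special symplectic partition of `2n` -/
def IsIntervalS (f : ℕ → ℕ) (Δ : Set ℕ) : Prop :=
  (∃ a b, PairedS f a b ∧ Δ = {i | (i = 0 ∨ 1 ≤ mult f i) ∧ b ≤ i ∧ i ≤ a}) ∨
  (∃ i, Even i ∧ (i = 0 ∨ (2 ≤ i ∧ 1 ≤ mult f i)) ∧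
    (¬ ∃ a b, PairedS f a b ∧ b ≤ i ∧ i ≤ a) ∧ Δ = {i})

/-- `a = i_{2h-1}` and `b = i_{2h}` for some `h` (orthogonal partitions of `2n`) -/
def PairedOE (f : ℕ → ℕ) (a b : ℕ) : Prop :=
  b < a ∧ a ∈ OddSet f ∧ b ∈ OddSet f ∧ Even ((OddSet f ∩ Set.Ioi a).ncard) ∧
    OddSet f ∩ Set.Ioo b a = ∅

/-- intervals of a special orthogonal partition of `2n` -/
def IsIntervalOE (f : ℕ → ℕ) (Δ : Set ℕ) : Prop :=
  (∃ a b, PairedOE f a b ∧ Δ = {i | 1 ≤ mult f i ∧ b ≤ i ∧ i ≤ a}) ∨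
  (∃ i, Odd i ∧ 1 ≤ mult f i ∧ (¬ ∃ a b, PairedOE f a b ∧ b ≤ i ∧ i ≤ a) ∧ Δ = {i})

/-- `a = i_{2h}` and `b = i_{2h+1}` for some `h ≥ 1` (orthogonal partitions of `2n+1`) -/
def PairedOO (f : ℕ → ℕ) (a b : ℕ) : Prop :=
  b < a ∧ a ∈ OddSet f ∧ b ∈ OddSet f ∧ Odd ((OddSet f ∩ Set.Ioi a).ncard) ∧
    OddSet f ∩ Set.Ioo b a = ∅

/-- intervals of a special orthogonal partition of `2n+1` (convention `i_0 = ∞`) -/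
def IsIntervalOO (f : ℕ → ℕ) (Δ : Set ℕ) : Prop :=
  (∃ b, b ∈ OddSet f ∧ OddSet f ∩ Set.Ioi b = ∅ ∧ Δ = {i | 1 ≤ mult f i ∧ b ≤ i}) ∨
  (∃ a b, PairedOO f a b ∧ Δ = {i | 1 ≤ mult f i ∧ b ≤ i ∧ i ≤ a}) ∨
  (∃ i, Odd i ∧ 1 ≤ mult f i ∧
    (¬ ((∃ b, b ∈ OddSet f ∧ OddSet f ∩ Set.Ioi b = ∅ ∧ b ≤ i) ∨
        (∃ a b, PairedOO f a b ∧ b ≤ i ∧ i ≤ a))) ∧ Δ = {i})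

/-- `J(Δ) = {j ≥ 1 : λ_j ∈ Δ}` -/
def Jset (f : ℕ → ℕ) (Δ : Set ℕ) : Set ℕ := {j | 1 ≤ j ∧ f j ∈ Δ}

/-- `ζ(λ)` for a special symplectic partition (`j_max(Δ_min) = ∞`, so the smallest
interval contributes no `-1`: its `J`-set has no greatest element). -/
noncomputable def zetaS (f : ℕ → ℕ) : ℕ → ℤ := fun j =>
  if ∃ Δ, IsIntervalS f Δ ∧ IsLeast (Jset f Δ) j then 1
  else if ∃ Δ, IsIntervalS f Δ ∧ IsGreatest (Jset f Δ) j then -1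
  else 0

/-- `ζ(λ)` for a special orthogonal partition of `2n` -/
noncomputable def zetaOE (f : ℕ → ℕ) : ℕ → ℤ := fun j =>
  if ∃ Δ, IsIntervalOE f Δ ∧ IsLeast (Jset f Δ) j then 1
  else if ∃ Δ, IsIntervalOE f Δ ∧ IsGreatest (Jset f Δ) j then -1
  else 0

/-- `J^+` for `λ1` special symplectic and `λ2` special orthogonal (of `2n2`) -/
def JplusSet (f1 f2 : ℕ → ℕ) : Set ℕ :=
  {j | 1 ≤ j ∧ Even (f1 j) ∧ Odd (f2 j) ∧
    ((∃ Δ, IsIntervalS f1 Δ ∧ IsLeast (Jset f1 Δ) j) ∨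
     (∃ Δ, IsIntervalOE f2 Δ ∧ IsLeast (Jset f2 Δ) j))}

/-- `J^-` -/
def JminusSet (f1 f2 : ℕ → ℕ) : Set ℕ :=
  {j | 1 ≤ j ∧ Even (f1 j) ∧ Odd (f2 j) ∧
    ((∃ Δ, IsIntervalS f1 Δ ∧ IsGreatest (Jset f1 Δ) j) ∨
     (∃ Δ, IsIntervalOE f2 Δ ∧ IsGreatest (Jset f2 Δ) j))}

/-- the sequence `ξ` -/
noncomputable def xi (f1 f2 : ℕ → ℕ) : ℕ → ℤ := fun j =>
  if j ∈ JplusSet f1 f2 then 1 else if j ∈ JminusSet f1 f2 then -1 else 0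

/-- partial sums of an integer-valued sequence indexed from 1 -/
def Sz (f : ℕ → ℤ) (k : ℕ) : ℤ := ∑ j ∈ Finset.Icc 1 k, f j

/-- `g` is the greatest orthogonal partition of `N` which is dominated by the
sequence `t` (used to define the Spaltenstein-type duality `d`). -/
def IsDualOf (g : ℕ → ℕ) (N : ℕ) (t : ℕ → ℕ) : Prop :=
  (IsPartition g N ∧ Orth g ∧ Dom g t) ∧
  ∀ ν, IsPartition ν N → Orth ν → Dom ν t → Dom ν g

/-- `g = d(f)` for `f` a symplectic partition of `2m`: the greatest orthogonal
partition of `2m+1` dominated by `^t(f ∪ (1))`. -/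
def IsSympDual (g : ℕ → ℕ) (m : ℕ) (f : ℕ → ℕ) : Prop :=
  IsDualOf g (2*m+1) (transpose (unionP f one1))

/-- `g = d(f)` for `f` an orthogonal partition of `2m`: the greatest orthogonal
partition of `2m` dominated by `^tf`. -/
def IsOrthDual (g : ℕ → ℕ) (m : ℕ) (f : ℕ → ℕ) : Prop :=
  IsDualOf g (2*m) (transpose f)

/-! ### Part 1: infrastructure -/

/-- `f` vanishes beyond `M` -/
def Bnd (f : ℕ → ℕ) (M : ℕ) : Prop := ∀ j, M < j → f j = 0

/-- `f` is nonincreasing on indices `≥ 1` -/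
def Mono (f : ℕ → ℕ) : Prop := ∀ ⦃j k : ℕ⦄, 1 ≤ j → j ≤ k → f k ≤ f j

lemma S_zero (f : ℕ → ℕ) : S f 0 = 0 := by simp [S]

lemma S_succ (f : ℕ → ℕ) (k : ℕ) : S f (k+1) = S f k + f (k+1) := by
  rw [S, S, Finset.sum_Icc_succ_top (by omega)]

lemma S_mono_k (f : ℕ → ℕ) {k l : ℕ} (h : k ≤ l) : S f k ≤ S f l := by
  unfold S
  exact Finset.sum_le_sum_of_subset (Finset.Icc_subset_Icc le_rfl h)

lemma S_stable {f : ℕ → ℕ} {M m : ℕ} (hB : Bnd f M) (h : M ≤ m) : S f m = S f M := by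
  unfold S
  have hsplit : Finset.Icc 1 m = Finset.Icc 1 M ∪ Finset.Icc (M+1) m := by
    ext x; simp only [Finset.mem_union, Finset.mem_Icc]; omega
  have hdisj : Disjoint (Finset.Icc 1 M) (Finset.Icc (M+1) m) := by
    rw [Finset.disjoint_left]; intro x hx hx'
    simp only [Finset.mem_Icc] at hx hx'; omega
  rw [hsplit, Finset.sum_union hdisj]
  have : ∑ x ∈ Finset.Icc (M+1) m, f x = 0 := by
    apply Finset.sum_eq_zero
    intro x hx
    simp only [Finset.mem_Icc] at hx
    exact hB x (by omega)
  rw [this, Nat.add_zero]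

lemma S_total {f : ℕ → ℕ} {N M : ℕ} (hf : IsPartition f N) (hB : Bnd f M) : S f M = N :=
  hf.total M hB

/-- `S f k` as a sum over `Icc 1 M` when `k ≥ M` -/
lemma S_add (f g : ℕ → ℕ) (k : ℕ) : S (fun j => f j + g j) k = S f k + S g k := by
  simp [S, Finset.sum_add_distrib]

lemma transpose_zero (f : ℕ → ℕ) : transpose f 0 = 0 := by
  unfold transpose
  convert Set.ncard_empty ℕ
  ext i; simp

lemma transpose_apply {f : ℕ → ℕ} {M : ℕ} (hB : Bnd f M) {j : ℕ} (hj : 1 ≤ j) :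
    transpose f j = ((Finset.Icc 1 M).filter (fun i => j ≤ f i)).card := by
  unfold transpose
  rw [← Set.ncard_coe_finset]
  congr 1
  ext i
  simp only [Finset.coe_filter, Finset.mem_Icc, Set.mem_setOf_eq]
  constructor
  · rintro ⟨h1, _, h3⟩
    refine ⟨⟨h1, ?_⟩, h3⟩
    by_contra h
    have := hB i (by omega)
    omega
  · rintro ⟨⟨h1, _⟩, h3⟩
    exact ⟨h1, hj, h3⟩

/-- Galois connection for monotone `f` -/
lemma transpose_galois {f : ℕ → ℕ} {M : ℕ} (hm : Mono f) (hB : Bnd f M)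
    {i m : ℕ} (hi : 1 ≤ i) (hmm : 1 ≤ m) :
    m ≤ transpose f i ↔ i ≤ f m := by
  rw [transpose_apply hB hi]
  constructor
  · intro h
    by_contra hc
    have hsub : (Finset.Icc 1 M).filter (fun i' => i ≤ f i') ⊆ Finset.Icc 1 (m-1) := by
      intro x hx
      simp only [Finset.mem_filter, Finset.mem_Icc] at hx ⊢
      refine ⟨hx.1.1, ?_⟩
      by_contra hxm
      have : m ≤ x := by omega
      have := hm hmm this
      omega
    have := Finset.card_le_card hsub
    rw [Nat.card_Icc] at this
    omega
  · intro h
    have hM : m ≤ M := by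
      by_contra hc
      have := hB m (by omega)
      omega
    have hsub : Finset.Icc 1 m ⊆ (Finset.Icc 1 M).filter (fun i' => i ≤ f i') := by
      intro x hx
      simp only [Finset.mem_Icc] at hx
      simp only [Finset.mem_filter, Finset.mem_Icc]
      exact ⟨⟨hx.1, le_trans hx.2 hM⟩, le_trans h (hm hx.1 hx.2)⟩
    have := Finset.card_le_card hsub
    rw [Nat.card_Icc] at this
    omega

lemma transpose_mono (f : ℕ → ℕ) {M : ℕ} (hB : Bnd f M) : Mono (transpose f) := by
  intro j k hj hjk
  rcases Nat.eq_zero_or_pos j with rfl|hj'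
  · omega
  rw [transpose_apply hB hj, transpose_apply hB (by omega : 1 ≤ k)]
  apply Finset.card_le_card
  intro x hx
  simp only [Finset.mem_filter] at hx ⊢
  exact ⟨hx.1, le_trans hjk hx.2⟩

lemma transpose_bnd {f : ℕ → ℕ} {M : ℕ} (hm : Mono f) (hB : Bnd f M) :
    Bnd (transpose f) (f 1) := by
  intro j hj
  have h1 : 1 ≤ j := by omega
  rw [transpose_apply hB h1]
  rw [Finset.card_eq_zero, Finset.filter_eq_empty_iff]
  intro x hx
  simp only [Finset.mem_Icc] at hx
  have := hm (le_refl 1) hx.1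
  omega

/-- Double counting: `S (transpose f) k = Σ_{i=1}^M min (f i) k`. -/
lemma S_transpose {f : ℕ → ℕ} {M : ℕ} (hB : Bnd f M) (k : ℕ) :
    S (transpose f) k = ∑ i ∈ Finset.Icc 1 M, min (f i) k := by
  unfold S
  have h1 : ∀ j ∈ Finset.Icc 1 k, transpose f j
      = ∑ i ∈ Finset.Icc 1 M, (if j ≤ f i then 1 else 0) := by
    intro j hj
    simp only [Finset.mem_Icc] at hj
    rw [transpose_apply hB hj.1, Finset.card_filter]
  rw [Finset.sum_congr rfl h1, Finset.sum_comm]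
  apply Finset.sum_congr rfl
  intro i _
  have : (Finset.Icc 1 k).filter (fun j => j ≤ f i) = Finset.Icc 1 (min (f i) k) := by
    ext x
    simp only [Finset.mem_filter, Finset.mem_Icc]
    omega
  rw [← Finset.sum_filter, this]
  simp [Finset.sum_const, Nat.card_Icc]

/-- double transpose -/
lemma transpose_transpose {f : ℕ → ℕ} {M : ℕ} (hm : Mono f) (hB : Bnd f M)
    {j : ℕ} (hj : 1 ≤ j) : transpose (transpose f) j = f j := by
  have : {i : ℕ | 1 ≤ i ∧ 1 ≤ j ∧ j ≤ transpose f i} = Set.Icc 1 (f j) := by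
    ext i
    simp only [Set.mem_setOf_eq, Set.mem_Icc]
    constructor
    · rintro ⟨h1, _, h3⟩
      exact ⟨h1, (transpose_galois hm hB h1 hj).mp h3⟩
    · rintro ⟨h1, h2⟩
      exact ⟨h1, hj, (transpose_galois hm hB h1 hj).mpr h2⟩
  show Set.ncard {i : ℕ | 1 ≤ i ∧ 1 ≤ j ∧ j ≤ transpose f i} = f j
  rw [this, ← Finset.coe_Icc, Set.ncard_coe_finset, Nat.card_Icc]
  omega

/-- total of the transpose: `S (transpose f) k = S f M` for big `k` -/
lemma S_transpose_total {f : ℕ → ℕ} {M k : ℕ} (hB : Bnd f M)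
    (hk : ∀ i, 1 ≤ i → i ≤ M → f i ≤ k) :
    S (transpose f) k = S f M := by
  rw [S_transpose hB]
  unfold S
  apply Finset.sum_congr rfl
  intro i hi
  simp only [Finset.mem_Icc] at hi
  exact min_eq_left (hk i hi.1 hi.2)

/-- Upper bound `(U)`: for any `m ≤ M`. -/
lemma S_transpose_ub {f : ℕ → ℕ} {M : ℕ} (hB : Bnd f M) (k : ℕ) {m : ℕ} (hm : m ≤ M) :
    S (transpose f) k ≤ m * k + (S f M - S f m) := by
  rw [S_transpose hB]
  have hsplit : Finset.Icc 1 M = Finset.Icc 1 m ∪ Finset.Icc (m+1) M := by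
    ext x; simp only [Finset.mem_union, Finset.mem_Icc]; omega
  have hdisj : Disjoint (Finset.Icc 1 m) (Finset.Icc (m+1) M) := by
    rw [Finset.disjoint_left]; intro x hx hx'
    simp only [Finset.mem_Icc] at hx hx'; omega
  rw [hsplit, Finset.sum_union hdisj]
  have h1 : ∑ i ∈ Finset.Icc 1 m, min (f i) k ≤ m * k := by
    calc ∑ i ∈ Finset.Icc 1 m, min (f i) k ≤ ∑ _i ∈ Finset.Icc 1 m, k :=
          Finset.sum_le_sum (fun i _ => min_le_right _ _)
      _ = m * k := by simp [Nat.card_Icc, Nat.mul_comm]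
  have h2 : ∑ i ∈ Finset.Icc (m+1) M, min (f i) k ≤ S f M - S f m := by
    have : ∑ i ∈ Finset.Icc (m+1) M, min (f i) k ≤ ∑ i ∈ Finset.Icc (m+1) M, f i :=
      Finset.sum_le_sum (fun i _ => min_le_left _ _)
    have he : S f m + ∑ i ∈ Finset.Icc (m+1) M, f i = S f M := by
      unfold S; rw [hsplit, Finset.sum_union hdisj]
    omega
  omega

/-- Lower bound `(L)`: equality at `p = transpose f k`, for monotone `f`, `k ≥ 1`. -/
lemma S_transpose_lb {f : ℕ → ℕ} {M : ℕ} (hm : Mono f) (hB : Bnd f M) {k : ℕ} (hk : 1 ≤ k) :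
    transpose f k * k + (S f M - S f (transpose f k)) ≤ S (transpose f) k := by
  set p := transpose f k with hp
  have hpM : p ≤ M := by
    rw [hp, transpose_apply hB hk]
    calc ((Finset.Icc 1 M).filter _).card ≤ (Finset.Icc 1 M).card := Finset.card_le_card
          (Finset.filter_subset _ _)
      _ = M := by rw [Nat.card_Icc]; omega
  rw [S_transpose hB]
  have hsplit : Finset.Icc 1 M = Finset.Icc 1 p ∪ Finset.Icc (p+1) M := by
    ext x; simp only [Finset.mem_union, Finset.mem_Icc]; omega
  have hdisj : Disjoint (Finset.Icc 1 p) (Finset.Icc (p+1) M) := by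
    rw [Finset.disjoint_left]; intro x hx hx'
    simp only [Finset.mem_Icc] at hx hx'; omega
  rw [hsplit, Finset.sum_union hdisj]
  have h1 : ∑ i ∈ Finset.Icc 1 p, min (f i) k = p * k := by
    have : ∀ i ∈ Finset.Icc 1 p, min (f i) k = k := by
      intro i hi
      simp only [Finset.mem_Icc] at hi
      have hple : p ≤ transpose f k := le_of_eq hp.symm
      have : k ≤ f i := (transpose_galois hm hB hk hi.1).mp (le_trans hi.2 hple)
      omega
    rw [Finset.sum_congr rfl this, Finset.sum_const, Nat.card_Icc, smul_eq_mul,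
      Nat.add_sub_cancel]
  have h2 : ∑ i ∈ Finset.Icc (p+1) M, min (f i) k = ∑ i ∈ Finset.Icc (p+1) M, f i := by
    apply Finset.sum_congr rfl
    intro i hi
    simp only [Finset.mem_Icc] at hi
    have hfi : f i < k := by
      by_contra hc
      have : i ≤ p := by
        rw [hp]
        exact (transpose_galois hm hB hk (by omega)).mpr (by omega)
      omega
    omega
  have he : S f p + ∑ i ∈ Finset.Icc (p+1) M, f i = S f M := by
    unfold S; rw [hsplit, Finset.sum_union hdisj]
  omega

/-- transpose reverses dominance -/
lemma dom_transpose {a b : ℕ → ℕ} {N Ma Mb : ℕ}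
    (hma : Mono a) (hBa : Bnd a Ma) (hNa : S a Ma = N)
    (hBb : Bnd b Mb) (hNb : S b Mb = N)
    (hdom : ∀ m, S a m ≤ S b m) :
    ∀ k, S (transpose b) k ≤ S (transpose a) k := by
  intro k
  rcases Nat.eq_zero_or_pos k with rfl|hk
  · simp [S]
  set M := max Ma Mb with hM
  have hBa' : Bnd a M := fun j hj => hBa j (by omega)
  have hBb' : Bnd b M := fun j hj => hBb j (by omega)
  have hNa' : S a M = N := by rw [S_stable hBa (le_max_left _ _)]; exact hNa
  have hNb' : S b M = N := by rw [S_stable hBb (le_max_right _ _)]; exact hNb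
  set p := transpose a k with hp
  have hpM : p ≤ M := by
    rw [hp, transpose_apply hBa' hk]
    calc ((Finset.Icc 1 M).filter _).card ≤ (Finset.Icc 1 M).card :=
          Finset.card_le_card (Finset.filter_subset _ _)
      _ = M := by rw [Nat.card_Icc]; omega
  calc S (transpose b) k ≤ p * k + (S b M - S b p) := S_transpose_ub hBb' k hpM
    _ ≤ p * k + (S a M - S a p) := by
        have h1 := hdom p
        have h2 : S a p ≤ S a M := by
          rcases le_or_gt p M with h|h
          · exact S_mono_k a h
          · omega
        omega
    _ ≤ S (transpose a) k := by rw [hNa', ← hNa'] ; exact S_transpose_lb hma hBa' hk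

/-- `mult` of an attained positive value via a Finset -/
lemma mult_eq_card {f : ℕ → ℕ} {M : ℕ} (hB : Bnd f M) {v : ℕ} (hv : 1 ≤ v) :
    mult f v = ((Finset.Icc 1 M).filter (fun j => f j = v)).card := by
  unfold mult
  rw [← Set.ncard_coe_finset]
  congr 1
  ext j
  simp only [Finset.coe_filter, Finset.mem_Icc, Set.mem_setOf_eq]
  constructor
  · rintro ⟨h1, h2⟩
    refine ⟨⟨h1, ?_⟩, h2⟩
    by_contra h
    have := hB j (by omega); omega
  · rintro ⟨⟨h1, _⟩, h2⟩; exact ⟨h1, h2⟩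

lemma mult_zero {f : ℕ → ℕ} {M : ℕ} (hB : Bnd f M) : mult f 0 = 0 := by
  unfold mult
  apply Set.Infinite.ncard
  apply Set.infinite_of_not_bddAbove
  rintro ⟨B, hBd⟩
  have : M + B + 1 ∈ {j : ℕ | 1 ≤ j ∧ f j = 0} := ⟨by omega, hB _ (by omega)⟩
  have := hBd this
  omega

lemma mult_attained {f : ℕ → ℕ} {M : ℕ} (hB : Bnd f M) {j v : ℕ} (hj : 1 ≤ j)
    (hv : 1 ≤ v) (hfj : f j = v) : 1 ≤ mult f v := by
  rw [mult_eq_card hB hv]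
  rw [Nat.one_le_iff_ne_zero, ← Nat.pos_iff_ne_zero, Finset.card_pos]
  refine ⟨j, ?_⟩
  simp only [Finset.mem_filter, Finset.mem_Icc]
  refine ⟨⟨hj, ?_⟩, hfj⟩
  by_contra h
  have := hB j (by omega); omega

lemma mult_exists {f : ℕ → ℕ} {M : ℕ} (hB : Bnd f M) {v : ℕ} (hv : 1 ≤ v)
    (hm : 1 ≤ mult f v) : ∃ j, 1 ≤ j ∧ f j = v := by
  rw [mult_eq_card hB hv] at hm
  rw [Nat.one_le_iff_ne_zero, ← Nat.pos_iff_ne_zero, Finset.card_pos] at hm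
  obtain ⟨j, hj⟩ := hm
  simp only [Finset.mem_filter, Finset.mem_Icc] at hj
  exact ⟨j, hj.1.1, hj.2⟩
/-! ### Part 2: counting and parity lemmas -/

lemma val_le_top {f : ℕ → ℕ} (hm : Mono f) {j : ℕ} (hj : 1 ≤ j) : f j ≤ f 1 :=
  hm (le_refl 1) hj

lemma partition_transpose {f : ℕ → ℕ} {M : ℕ} (hm : Mono f) (hB : Bnd f M) :
    IsPartition (transpose f) (S f M) := by
  refine ⟨transpose_mono f hB, ⟨f 1, transpose_bnd hm hB⟩, ?_⟩
  intro m hmz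
  apply S_transpose_total hB
  intro i hi1 hiM
  by_contra hc
  have h1 : i ≤ transpose f (m+1) := (transpose_galois hm hB (by omega) hi1).mpr (by omega)
  have := hmz (m+1) (by omega)
  omega

lemma transpose_split {f : ℕ → ℕ} {M : ℕ} (hB : Bnd f M) {v : ℕ} (hv : 1 ≤ v) :
    transpose f v = transpose f (v+1) + mult f v := by
  rw [transpose_apply hB hv, transpose_apply hB (by omega : (1:ℕ) ≤ v+1), mult_eq_card hB hv]
  rw [← Finset.card_union_of_disjoint]
  · congr 1
    ext x
    simp only [Finset.mem_union, Finset.mem_filter, Finset.mem_Icc]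
    omega
  · rw [Finset.disjoint_left]
    intro x hx hx'
    simp only [Finset.mem_filter, Finset.mem_Icc] at hx hx'
    omega

/-- `transpose f v = Σ_{i=v}^T mult f i` for `v ≥ 1`, `T ≥ f 1`. -/
lemma transpose_eq_sum_mult {f : ℕ → ℕ} {M : ℕ} (hm : Mono f) (hB : Bnd f M)
    {v T : ℕ} (hv : 1 ≤ v) (hT : f 1 ≤ T) :
    transpose f v = ∑ i ∈ Finset.Icc v T, mult f i := by
  rcases le_or_gt v T with hvT | hvT
  · obtain ⟨c, hc⟩ : ∃ c, T + 1 - v = c := ⟨_, rfl⟩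
    induction c generalizing v with
    | zero => omega
    | succ n ih =>
      rcases Nat.eq_or_lt_of_le hvT with rfl | hlt
      · rw [Finset.Icc_self, Finset.sum_singleton, transpose_split hB hv]
        have : transpose f (v+1) = 0 := by
          have := transpose_bnd hm hB (v+1) (by omega)
          exact this
        omega
      · rw [transpose_split hB hv]
        rw [ih (by omega) (by omega) (by omega)]
        rw [show Finset.Icc v T = insert v (Finset.Icc (v+1) T) by
          ext x; simp only [Finset.mem_insert, Finset.mem_Icc]; omega]
        rw [Finset.sum_insert (by simp only [Finset.mem_Icc]; omega)]
        omega
  · have h0 : Finset.Icc v T = ∅ := by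
      rw [Finset.Icc_eq_empty_iff]; omega
    rw [h0, Finset.sum_empty]
    have := transpose_bnd hm hB v (by omega)
    exact this

/-- first/last occurrence: `transpose f v = p` when `f p ≥ v > f (p+1)` -/
lemma transpose_val {f : ℕ → ℕ} {M : ℕ} (hm : Mono f) (hB : Bnd f M)
    {v p : ℕ} (hv : 1 ≤ v) (h1 : 1 ≤ p → v ≤ f p) (h2 : f (p+1) < v) :
    transpose f v = p := by
  have hub : transpose f v ≤ p := by
    by_contra hc
    have : p + 1 ≤ transpose f v := by omega
    have := (transpose_galois hm hB hv (by omega)).mp this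
    omega
  rcases Nat.eq_zero_or_pos p with rfl | hp
  · omega
  have := (transpose_galois hm hB hv hp).mpr (h1 hp)
  omega

/-- parity of a sum vs number of odd summands -/
lemma even_sum_iff (s : Finset ℕ) (g : ℕ → ℕ) :
    (Even (∑ i ∈ s, g i) ↔ Even ((s.filter (fun i => Odd (g i))).card)) := by
  induction s using Finset.induction_on with
  | empty => simp
  | @insert a s' hx ih =>
    rw [Finset.sum_insert hx, Finset.filter_insert]
    by_cases hga : Odd (g a)
    · rw [if_pos hga,
        Finset.card_insert_of_notMem (fun hc => hx (Finset.mem_of_mem_filter _ hc))]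
      rw [Nat.even_add, ih, Nat.even_add_one]
      have : ¬ Even (g a) := Nat.not_even_iff_odd.mpr hga
      tauto
    · rw [if_neg hga, Nat.even_add, ih]
      have : Even (g a) := Nat.not_odd_iff_even.mp hga
      tauto

/-- `OddSet` is representable as a finset -/
lemma oddSet_eq_finset {f : ℕ → ℕ} {M T : ℕ} (hm : Mono f) (hB : Bnd f M) (hT : f 1 ≤ T) :
    OddSet f = ↑((Finset.Icc 1 T).filter (fun i => Odd (mult f i))) := by
  ext i
  simp only [OddSet, Set.mem_setOf_eq, Finset.coe_filter, Finset.mem_Icc]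
  constructor
  · intro h
    have hi1 : 1 ≤ i := by
      by_contra hc
      have : i = 0 := by omega
      rw [this, mult_zero hB] at h
      simp at h
    have : 1 ≤ mult f i := by
      rcases h with ⟨w, hw⟩; omega
    obtain ⟨j, hj1, hj2⟩ := mult_exists hB hi1 this
    have : f j ≤ f 1 := val_le_top hm hj1
    exact ⟨⟨hi1, by omega⟩, h⟩
  · rintro ⟨_, h⟩; exact h

lemma oddSet_finite {f : ℕ → ℕ} {M : ℕ} (hm : Mono f) (hB : Bnd f M) :
    (OddSet f).Finite := by
  rw [oddSet_eq_finset hm hB (le_refl (f 1))]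
  exact Finset.finite_toSet _

/-- parity bridge used everywhere: `transpose f (a+1) ≡ |OddSet f ∩ Ioi a|` -/
lemma transpose_parity {f : ℕ → ℕ} {M : ℕ} (hm : Mono f) (hB : Bnd f M) (a : ℕ) :
    (Even (transpose f (a+1)) ↔ Even ((OddSet f ∩ Set.Ioi a).ncard)) := by
  set T := max (f 1) a with hTdef
  rw [transpose_eq_sum_mult hm hB (by omega) (le_max_left _ _)]
  rw [even_sum_iff]
  have hset : OddSet f ∩ Set.Ioi a
      = ↑((Finset.Icc (a+1) T).filter (fun i => Odd (mult f i))) := by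
    ext i
    simp only [Set.mem_inter_iff, Finset.coe_filter, Finset.mem_Icc, Set.mem_setOf_eq,
      Set.mem_Ioi, OddSet]
    constructor
    · rintro ⟨h1, h2⟩
      have hi1 : 1 ≤ i := by
        by_contra hc
        have hi0 : i = 0 := by omega
        rw [hi0, mult_zero hB] at h1
        simp at h1
      obtain ⟨j, hj1, hj2⟩ := mult_exists hB hi1 (by rcases h1 with ⟨w, hw⟩; omega)
      have := val_le_top hm hj1
      exact ⟨⟨by omega, by omega⟩, h1⟩
    · rintro ⟨⟨h1, h2⟩, h3⟩
      exact ⟨h3, by omega⟩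
  rw [hset, Set.ncard_coe_finset]

/-- sum of `f` has parity of the number of odd multiplicities of odd values,
for `f` orthogonal. -/
lemma oddset_even_card_orth {f : ℕ → ℕ} {M : ℕ} (hm : Mono f) (hB : Bnd f M)
    (ho : Orth f) (he : Even (S f M)) : Even ((OddSet f).ncard) := by
  set T := f 1 with hT
  -- card of odd-valued indices
  have h1 : Even (((Finset.Icc 1 M).filter (fun j => Odd (f j))).card) := by
    rw [← even_sum_iff]; exact he
  -- fiberwise
  have h2 : ((Finset.Icc 1 M).filter (fun j => Odd (f j))).card
      = ∑ i ∈ (Finset.Icc 1 T).filter (fun i => Odd i),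
          (((Finset.Icc 1 M).filter (fun j => Odd (f j))).filter (fun j => f j = i)).card := by
    apply Finset.card_eq_sum_card_fiberwise
    intro j hj
    simp only [Finset.mem_coe, Finset.mem_filter, Finset.mem_Icc] at hj ⊢
    obtain ⟨⟨hj1, _⟩, hj2⟩ := hj
    refine ⟨⟨?_, ?_⟩, hj2⟩
    · rcases hj2 with ⟨w, hw⟩; omega
    · exact val_le_top hm hj1
  have h3 : ∀ i ∈ (Finset.Icc 1 T).filter (fun i => Odd i),
      (((Finset.Icc 1 M).filter (fun j => Odd (f j))).filter (fun j => f j = i)).card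
        = mult f i := by
    intro i hi
    simp only [Finset.mem_filter, Finset.mem_Icc] at hi
    rw [mult_eq_card hB hi.1.1]
    congr 1
    ext j
    simp only [Finset.mem_filter, Finset.mem_Icc]
    constructor
    · rintro ⟨⟨h, _⟩, h'⟩; exact ⟨h, h'⟩
    · rintro ⟨h, h'⟩; exact ⟨⟨h, by rw [h']; exact hi.2⟩, h'⟩
  rw [h2, Finset.sum_congr rfl h3] at h1
  rw [even_sum_iff] at h1
  have hset : OddSet f
      = ↑(((Finset.Icc 1 T).filter (fun i => Odd i)).filter (fun i => Odd (mult f i))) := by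
    have h4 := oddSet_eq_finset hm hB (le_refl T)
    rw [h4]
    ext i
    simp only [Finset.coe_filter, Finset.mem_Icc, Set.mem_setOf_eq, Finset.mem_filter]
    constructor
    · rintro ⟨⟨h1', h2'⟩, h3'⟩
      refine ⟨⟨⟨h1', h2'⟩, ?_⟩, h3'⟩
      by_contra hc
      have heven : Even i := Nat.not_odd_iff_even.mp hc
      have := ho i heven h1'
      exact (Nat.not_odd_iff_even.mpr this) h3'
    · rintro ⟨⟨⟨h1', h2'⟩, _⟩, h3'⟩; exact ⟨⟨h1', h2'⟩, h3'⟩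
  rw [hset, Set.ncard_coe_finset]
  exact h1

lemma dsymp_even_card {f : ℕ → ℕ} {M : ℕ} (hm : Mono f) (hB : Bnd f M) :
    Even ((Dsymp f).ncard) := by
  have h0 : (0:ℕ) ∉ OddSet f := by
    simp only [OddSet, Set.mem_setOf_eq, mult_zero hB]
    simp
  rcases Nat.even_or_odd ((OddSet f).ncard) with he | ho
  · have : Dsymp f = OddSet f := by
      ext i
      simp only [Dsymp, OddSet, Set.mem_setOf_eq]
      constructor
      · rintro (h | ⟨_, h⟩)
        · exact h
        · exact absurd he (Nat.not_even_iff_odd.mpr h)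
      · intro h; exact Or.inl h
    rw [this]; exact he
  · have : Dsymp f = insert 0 (OddSet f) := by
      ext i
      simp only [Dsymp, OddSet, Set.mem_insert_iff, Set.mem_setOf_eq]
      constructor
      · rintro (h | ⟨h, _⟩)
        · exact Or.inr h
        · exact Or.inl h
      · rintro (rfl | h)
        · exact Or.inr ⟨rfl, ho⟩
        · exact Or.inl h
    rw [this, Set.ncard_insert_of_notMem h0 (oddSet_finite hm hB)]
    rcases ho with ⟨w, hw⟩
    exact ⟨w+1, by omega⟩

lemma dsymp_inter_Ioi {f : ℕ → ℕ} (a : ℕ) :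
    Dsymp f ∩ Set.Ioi a = OddSet f ∩ Set.Ioi a := by
  ext i
  simp only [Dsymp, OddSet, Set.mem_inter_iff, Set.mem_setOf_eq, Set.mem_Ioi]
  constructor
  · rintro ⟨h | ⟨rfl, _⟩, h2⟩
    · exact ⟨h, h2⟩
    · omega
  · rintro ⟨h, h2⟩; exact ⟨Or.inl h, h2⟩

/-- `SpecialPairs`: partial sums at even indices are even -/
lemma sp_even_S {f : ℕ → ℕ} (hsp : SpecialPairs f) (j : ℕ) : Even (S f (2*j)) := by
  induction j with
  | zero => simp [S]
  | succ n ih =>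
    have h1 : 2*(n+1) = (2*n + 1) + 1 := by omega
    rw [h1, S_succ, S_succ]
    have h2 := hsp (n+1) (by omega)
    have h3 : 2*(n+1) - 1 = 2*n+1 := by omega
    have h4 : 2*(n+1) = 2*n+1+1 := by omega
    rw [h3, h4] at h2
    rcases ih with ⟨w, hw⟩
    rcases Nat.even_or_odd (f (2*n+1)) with he | hodd
    · have he2 : Even (f (2*n+1+1)) := by
        rw [Nat.even_iff] at he ⊢; omega
      rcases he with ⟨u, hu⟩; rcases he2 with ⟨u2, hu2⟩
      exact ⟨w + u + u2, by omega⟩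
    · have ho2 : Odd (f (2*n+1+1)) := by
        rw [Nat.odd_iff] at hodd ⊢; omega
      rcases hodd with ⟨u, hu⟩; rcases ho2 with ⟨u2, hu2⟩
      exact ⟨w + u + u2 + 1, by omega⟩

/-- `SpecialPairs`: across an odd index `p`, `f p` and `f (p+1)` have the same parity -/
lemma sp_pair {f : ℕ → ℕ} (hsp : SpecialPairs f) {p : ℕ} (hp : Odd p) :
    f p % 2 = f (p+1) % 2 := by
  rcases hp with ⟨j, hj⟩
  have := hsp (j+1) (by omega)
  have h1 : 2*(j+1) - 1 = p := by omega
  have h2 : 2*(j+1) = p + 1 := by omega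
  rwa [h1, h2] at this

/-- orthogonal partitions: odd partial sums of the transpose are congruent to the total -/
lemma orth_transpose_odd_sum {d : ℕ → ℕ} {M : ℕ} (hm : Mono d) (hB : Bnd d M)
    (ho : Orth d) {k : ℕ} (hk : Odd k) : S (transpose d) k % 2 = (S d M) % 2 := by
  have key : ∀ i, 1 ≤ i → Even i → (transpose d i + transpose d (i+1)) % 2 = 0 := by
    intro i hi he
    have hsplit := transpose_split hB hi
    have hmult := ho i he hi
    rw [Nat.even_iff] at hmult
    omega
  have step : ∀ j, S (transpose d) (1 + 2*j) % 2 = S (transpose d) 1 % 2 := by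
    intro j
    induction j with
    | zero => rfl
    | succ n ih =>
      have h1 : 1 + 2*(n+1) = (1 + 2*n + 1) + 1 := by omega
      rw [h1, S_succ, S_succ]
      have := key (1+2*n+1) (by omega) (by exact ⟨n+1, by omega⟩)
      omega
  -- pick big odd index
  set K := 2 * (M + d 1 + k) + 1 with hK
  have hKbig : S (transpose d) K = S d M := by
    apply S_transpose_total hB
    intro i hi1 hiM
    have := val_le_top hm hi1
    omega
  have h1 : S (transpose d) K % 2 = S (transpose d) 1 % 2 := by
    have : K = 1 + 2*(M + d 1 + k) := by omega
    rw [this]; exact step _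
  rcases hk with ⟨j, hj⟩
  have h2 : S (transpose d) k % 2 = S (transpose d) 1 % 2 := by
    have : k = 1 + 2*j := by omega
    rw [this]; exact step j
  omega
/-! ### Part 3: pairing structure -/

/-- generic pairing predicate (shape of `PairedS`/`PairedOE`) -/
def GP (D : Set ℕ) (a b : ℕ) : Prop :=
  b < a ∧ a ∈ D ∧ b ∈ D ∧ Even ((D ∩ Set.Ioi a).ncard) ∧ D ∩ Set.Ioo b a = ∅

lemma pairedS_iff {f : ℕ → ℕ} {a b : ℕ} : PairedS f a b ↔ GP (Dsymp f) a b := Iff.rfl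
lemma pairedOE_iff {f : ℕ → ℕ} {a b : ℕ} : PairedOE f a b ↔ GP (OddSet f) a b := Iff.rfl

lemma even_sum_of_forall {s : Finset ℕ} {g : ℕ → ℕ} (h : ∀ i ∈ s, Even (g i)) :
    Even (∑ i ∈ s, g i) := by
  rw [even_sum_iff]
  have : s.filter (fun i => Odd (g i)) = ∅ := by
    rw [Finset.filter_eq_empty_iff]
    intro x hx
    exact Nat.not_odd_iff_even.mpr (h x hx)
  rw [this]
  simp

lemma sum_Icc_split (g : ℕ → ℕ) {x y z : ℕ} (h1 : x ≤ y + 1) (h2 : y ≤ z) :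
    ∑ i ∈ Finset.Icc x z, g i = (∑ i ∈ Finset.Icc x y, g i) + ∑ i ∈ Finset.Icc (y+1) z, g i := by
  rw [← Finset.sum_union]
  · congr 1
    ext i; simp only [Finset.mem_union, Finset.mem_Icc]; omega
  · rw [Finset.disjoint_left]
    intro i hi hi'
    simp only [Finset.mem_Icc] at hi hi'
    omega

/-- P1: an uncovered point has evenly many elements of `D` above it -/
lemma gp_uncovered {D : Set ℕ} (hfin : D.Finite) (heven : Even D.ncard) {v : ℕ}
    (h : ¬ ∃ a b, GP D a b ∧ b ≤ v ∧ v ≤ a) : Even ((D ∩ Set.Ioi v).ncard) := by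
  by_contra hodd
  have hodd' : Odd ((D ∩ Set.Ioi v).ncard) := Nat.not_even_iff_odd.mp hodd
  have hne : (D ∩ Set.Ioi v).Nonempty := by
    rw [Set.nonempty_iff_ne_empty]
    intro hc
    rw [hc] at hodd'
    simp [Set.ncard_empty] at hodd'
  set a := sInf (D ∩ Set.Ioi v) with ha
  have haMem : a ∈ D ∩ Set.Ioi v := Nat.sInf_mem hne
  have hIoiA : D ∩ Set.Ioi a = (D ∩ Set.Ioi v) \ {a} := by
    ext x
    simp only [Set.mem_inter_iff, Set.mem_Ioi, Set.mem_diff, Set.mem_singleton_iff]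
    constructor
    · rintro ⟨hx, hxa⟩
      exact ⟨⟨hx, lt_trans haMem.2 hxa⟩, by omega⟩
    · rintro ⟨⟨hx, hxv⟩, hxa⟩
      have : a ≤ x := Nat.sInf_le ⟨hx, hxv⟩
      exact ⟨hx, by omega⟩
  have hEvenA : Even ((D ∩ Set.Ioi a).ncard) := by
    rw [hIoiA, Set.ncard_diff_singleton_of_mem haMem]
    rcases hodd' with ⟨w, hw⟩
    exact ⟨w, by omega⟩
  have hIic : (D ∩ Set.Iic v).Nonempty := by
    rw [Set.nonempty_iff_ne_empty]
    intro hc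
    have hD : D = D ∩ Set.Ioi v := by
      ext x
      simp only [Set.mem_inter_iff, Set.mem_Ioi]
      constructor
      · intro hx
        refine ⟨hx, ?_⟩
        by_contra hxle
        have : x ∈ D ∩ Set.Iic v := ⟨hx, by simp [Set.mem_Iic]; omega⟩
        rw [hc] at this
        exact this
      · exact fun h => h.1
    rw [hD] at heven
    exact (Nat.not_even_iff_odd.mpr hodd') heven
  set b := sSup (D ∩ Set.Iic v) with hb
  have hbMem : b ∈ D ∩ Set.Iic v := Nat.sSup_mem hIic ((hfin.inter_of_left _).bddAbove)
  apply h
  refine ⟨a, b, ⟨?_, haMem.1, hbMem.1, hEvenA, ?_⟩, ?_, ?_⟩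
  · have h1 : b ≤ v := hbMem.2
    have h2 : v < a := haMem.2
    omega
  · ext x
    simp only [Set.mem_inter_iff, Set.mem_Ioo, Set.mem_empty_iff_false, iff_false]
    rintro ⟨hx, hbx, hxa⟩
    rcases le_or_gt x v with hle | hgt
    · have : x ≤ b := le_csSup ((hfin.inter_of_left _).bddAbove) ⟨hx, hle⟩
      omega
    · have : a ≤ x := Nat.sInf_le ⟨hx, hgt⟩
      omega
  · exact hbMem.2
  · have h5 : v < a := haMem.2
    omega

/-- P2: every element of `D` is covered by some pair -/
lemma gp_covered {D : Set ℕ} (hfin : D.Finite) (heven : Even D.ncard) {v : ℕ}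
    (hv : v ∈ D) : ∃ a b, GP D a b ∧ b ≤ v ∧ v ≤ a := by
  rcases Nat.even_or_odd ((D ∩ Set.Ioi v).ncard) with hc | hc
  · -- pair (v, b) with b the largest element below v
    have hIio : (D ∩ Set.Iio v).Nonempty := by
      rw [Set.nonempty_iff_ne_empty]
      intro hempty
      -- then D = (D ∩ Ioi v) ∪ {v}, odd cardinality
      have hD : D = insert v (D ∩ Set.Ioi v) := by
        ext x
        simp only [Set.mem_insert_iff, Set.mem_inter_iff, Set.mem_Ioi]
        constructor
        · intro hx
          rcases Nat.lt_trichotomy x v with h | h | h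
          · exfalso
            have : x ∈ D ∩ Set.Iio v := ⟨hx, h⟩
            rw [hempty] at this
            exact this
          · exact Or.inl h
          · exact Or.inr ⟨hx, h⟩
        · rintro (rfl | ⟨hx, _⟩)
          · exact hv
          · exact hx
      rw [hD, Set.ncard_insert_of_notMem (by simp) (hfin.inter_of_left _)] at heven
      rcases hc with ⟨w, hw⟩
      rcases heven with ⟨u, hu⟩
      omega
    set b := sSup (D ∩ Set.Iio v) with hb
    have hbMem : b ∈ D ∩ Set.Iio v := Nat.sSup_mem hIio ((hfin.inter_of_left _).bddAbove)
    refine ⟨v, b, ⟨hbMem.2, hv, hbMem.1, hc, ?_⟩, le_of_lt hbMem.2, le_refl v⟩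
    ext x
    simp only [Set.mem_inter_iff, Set.mem_Ioo, Set.mem_empty_iff_false, iff_false]
    rintro ⟨hx, hbx, hxv⟩
    have : x ≤ b := le_csSup ((hfin.inter_of_left _).bddAbove) ⟨hx, hxv⟩
    omega
  · -- pair (a, v) with a the least element above v
    have hne : (D ∩ Set.Ioi v).Nonempty := by
      rw [Set.nonempty_iff_ne_empty]
      intro hempty
      rw [hempty] at hc
      simp [Set.ncard_empty] at hc
    set a := sInf (D ∩ Set.Ioi v) with ha
    have haMem : a ∈ D ∩ Set.Ioi v := Nat.sInf_mem hne
    have hIoiA : D ∩ Set.Ioi a = (D ∩ Set.Ioi v) \ {a} := by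
      ext x
      simp only [Set.mem_inter_iff, Set.mem_Ioi, Set.mem_diff, Set.mem_singleton_iff]
      constructor
      · rintro ⟨hx, hxa⟩
        exact ⟨⟨hx, lt_trans haMem.2 hxa⟩, by omega⟩
      · rintro ⟨⟨hx, hxv⟩, hxa⟩
        have : a ≤ x := Nat.sInf_le ⟨hx, hxv⟩
        exact ⟨hx, by omega⟩
    refine ⟨a, v, ⟨haMem.2, haMem.1, hv, ?_, ?_⟩, le_refl v, le_of_lt haMem.2⟩
    · rw [hIoiA, Set.ncard_diff_singleton_of_mem haMem]
      rcases hc with ⟨w, hw⟩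
      exact ⟨w, by omega⟩
    · ext x
      simp only [Set.mem_inter_iff, Set.mem_Ioo, Set.mem_empty_iff_false, iff_false]
      rintro ⟨hx, hvx, hxa⟩
      have : a ≤ x := Nat.sInf_le ⟨hx, hvx⟩
      omega

lemma dsymp_finite {f : ℕ → ℕ} {M : ℕ} (hm : Mono f) (hB : Bnd f M) :
    (Dsymp f).Finite := by
  apply Set.Finite.subset (Set.Finite.insert 0 (oddSet_finite hm hB))
  intro i hi
  rcases hi with h | ⟨rfl, _⟩
  · exact Set.mem_insert_of_mem _ h
  · exact Set.mem_insert _ _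

/-- elements of `Dsymp` that are `≥ 1` have odd multiplicity -/
lemma dsymp_pos_odd {f : ℕ → ℕ} {a : ℕ} (ha : a ∈ Dsymp f) (ha1 : 1 ≤ a) :
    Odd (mult f a) := by
  rcases ha with h | ⟨rfl, _⟩
  · exact h
  · omega
/-! ### Part 4: parity of least/greatest elements of interval index sets -/

section Side1
variable {f : ℕ → ℕ} {M : ℕ}

lemma mem_interval_S {Δ : Set ℕ} {a b v : ℕ} (hB : Bnd f M)
    (hΔ : Δ = {i | (i = 0 ∨ 1 ≤ mult f i) ∧ b ≤ i ∧ i ≤ a})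
    (hj : ∃ j, 1 ≤ j ∧ f j = v) (h1 : b ≤ v) (h2 : v ≤ a) : v ∈ Δ := by
  rw [hΔ]
  refine ⟨?_, h1, h2⟩
  rcases Nat.eq_zero_or_pos v with rfl | hv
  · exact Or.inl rfl
  · obtain ⟨j, hj1, hj2⟩ := hj
    exact Or.inr (mult_attained hB hj1 hv hj2)

/-- `IsLeast` of the J-set of an interval of a special symplectic partition is odd -/
lemma least_odd_S (hm : Mono f) (hB : Bnd f M)
    {Δ : Set ℕ} {p : ℕ} (hI : IsIntervalS f Δ) (hL : IsLeast (Jset f Δ) p) : Odd p := by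
  have hp1 : 1 ≤ p := hL.1.1
  have key : ∃ c, Even (transpose f (c+1)) ∧ transpose f (c+1) = p - 1 := by
    rcases hI with ⟨a, b, hpair, hΔ⟩ | ⟨v, hve, hv0, hnc, hΔ⟩
    · -- paired interval
      have hfp : f p ∈ Δ := hL.1.2
      rw [hΔ] at hfp
      obtain ⟨_, hbv, hva⟩ := hfp
      refine ⟨a, ?_, ?_⟩
      · rw [transpose_parity hm hB]
        rw [← dsymp_inter_Ioi]
        exact hpair.2.2.2.1
      · apply transpose_val hm hB (by omega)
        · intro hpp
          by_contra hc
          have hge : f p ≤ f (p-1) := hm hpp (by omega)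
          have : p - 1 ∈ Jset f Δ := by
            refine ⟨hpp, mem_interval_S hB hΔ ⟨p-1, hpp, rfl⟩ (by omega) (by omega)⟩
          have := hL.2 this
          omega
        · have e : p - 1 + 1 = p := by omega
          rw [e]; omega
    · -- singleton
      have hfp : f p ∈ Δ := hL.1.2
      rw [hΔ, Set.mem_singleton_iff] at hfp
      refine ⟨v, ?_, ?_⟩
      · rw [transpose_parity hm hB]
        rw [← dsymp_inter_Ioi]
        exact gp_uncovered (dsymp_finite hm hB) (dsymp_even_card hm hB) hnc
      · apply transpose_val hm hB (by omega)
        · intro hpp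
          by_contra hc
          have hge : f p ≤ f (p-1) := hm hpp (by omega)
          have : p - 1 ∈ Jset f Δ := by
            refine ⟨hpp, ?_⟩
            rw [hΔ, Set.mem_singleton_iff]
            omega
          have := hL.2 this
          omega
        · have e : p - 1 + 1 = p := by omega
          rw [e]; omega
  obtain ⟨c, hc1, hc2⟩ := key
  rw [hc2] at hc1
  rcases hc1 with ⟨w, hw⟩
  exact ⟨w, by omega⟩

/-- `IsGreatest` of the J-set of an interval of a special symplectic partition is even -/
lemma greatest_even_S (hm : Mono f) (hB : Bnd f M)
    {Δ : Set ℕ} {p : ℕ} (hI : IsIntervalS f Δ) (hG : IsGreatest (Jset f Δ) p) : Even p := by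
  have hp1 : 1 ≤ p := hG.1.1
  obtain ⟨T, hT1, hT2⟩ : ∃ T, f 1 ≤ T ∧ M + p + 2 ≤ T :=
    ⟨max (f 1) (M + p + 2), le_max_left _ _, le_max_right _ _⟩
  rcases hI with ⟨a, b, hpair, hΔ⟩ | ⟨v, hve, hv0, hnc, hΔ⟩
  · -- paired interval
    have hfp : f p ∈ Δ := hG.1.2
    rw [hΔ] at hfp
    obtain ⟨_, hbv, hva⟩ := hfp
    have hb1 : 1 ≤ b := by
      by_contra hc
      have hb0 : b = 0 := by omega
      have hj : M + p + 1 ∈ Jset f Δ := by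
        refine ⟨by omega, ?_⟩
        rw [hΔ]
        have : f (M+p+1) = 0 := hB _ (by omega)
        rw [this]
        exact ⟨Or.inl rfl, by omega, by omega⟩
      have := hG.2 hj
      omega
    have hab : b < a := hpair.1
    have haOdd : Odd (mult f a) := dsymp_pos_odd hpair.2.1 (by omega)
    have hbOdd : Odd (mult f b) := dsymp_pos_odd hpair.2.2.1 hb1
    have htv : transpose f b = p := by
      apply transpose_val hm hB hb1
      · intro _; omega
      · by_contra hc
        have hle : f (p+1) ≤ f p := hm hp1 (by omega)
        have : p + 1 ∈ Jset f Δ := by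
          refine ⟨by omega, mem_interval_S hB hΔ ⟨p+1, by omega, rfl⟩ (by omega) (by omega)⟩
        have := hG.2 this
        omega
    -- now compute parity of transpose f b
    have hsum : transpose f b = ∑ i ∈ Finset.Icc b T, mult f i :=
      transpose_eq_sum_mult hm hB hb1 hT1
    have haT : a ≤ T := by
      have hma : 1 ≤ mult f a := by rcases haOdd with ⟨w, hw⟩; omega
      obtain ⟨j, hj1, hj2⟩ := mult_exists hB (by omega) hma
      have hja : f j ≤ f 1 := val_le_top hm hj1
      omega
    have hsplit1 : ∑ i ∈ Finset.Icc b T, mult f i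
        = (∑ i ∈ Finset.Icc b (a-1), mult f i) + ∑ i ∈ Finset.Icc a T, mult f i := by
      have e : a - 1 + 1 = a := by omega
      have hx := sum_Icc_split (fun i => mult f i)
        (show b ≤ (a-1)+1 by omega) (show a - 1 ≤ T by omega)
      rw [e] at hx
      exact hx
    have hsplit2 : ∑ i ∈ Finset.Icc b (a-1), mult f i
        = mult f b + ∑ i ∈ Finset.Icc (b+1) (a-1), mult f i := by
      rw [sum_Icc_split (fun i => mult f i) (show b ≤ b + 1 by omega) (show b ≤ a - 1 by omega)]
      rw [Finset.Icc_self, Finset.sum_singleton]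
    have hsplit3 : ∑ i ∈ Finset.Icc a T, mult f i
        = mult f a + ∑ i ∈ Finset.Icc (a+1) T, mult f i := by
      rw [sum_Icc_split (fun i => mult f i) (show a ≤ a + 1 by omega) haT]
      rw [Finset.Icc_self, Finset.sum_singleton]
    have hint : Even (∑ i ∈ Finset.Icc (b+1) (a-1), mult f i) := by
      apply even_sum_of_forall
      intro i hi
      simp only [Finset.mem_Icc] at hi
      by_contra hodd
      have hio : Odd (mult f i) := Nat.not_even_iff_odd.mp hodd
      have : i ∈ Dsymp f ∩ Set.Ioo b a := ⟨Or.inl hio, by constructor <;> omega⟩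
      rw [hpair.2.2.2.2] at this
      exact this
    have htail : Even (∑ i ∈ Finset.Icc (a+1) T, mult f i) := by
      rw [← transpose_eq_sum_mult hm hB (by omega) hT1]
      rw [transpose_parity hm hB, ← dsymp_inter_Ioi]
      exact hpair.2.2.2.1
    rw [Nat.even_iff]
    rw [Nat.even_iff] at hint htail
    rw [Nat.odd_iff] at haOdd hbOdd
    omega
  · -- singleton
    have hfp : f p ∈ Δ := hG.1.2
    rw [hΔ, Set.mem_singleton_iff] at hfp
    have hv1 : 1 ≤ v := by
      by_contra hc
      have hv0' : v = 0 := by omega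
      have hj : M + p + 1 ∈ Jset f Δ := by
        refine ⟨by omega, ?_⟩
        rw [hΔ, Set.mem_singleton_iff]
        rw [hB _ (by omega)]
        omega
      have := hG.2 hj
      omega
    have htv : transpose f v = p := by
      apply transpose_val hm hB hv1
      · intro _; omega
      · by_contra hc
        have hle : f (p+1) ≤ f p := hm hp1 (by omega)
        have : p + 1 ∈ Jset f Δ := by
          refine ⟨by omega, ?_⟩
          rw [hΔ, Set.mem_singleton_iff]
          omega
        have := hG.2 this
        omega
    have hsum : transpose f v = ∑ i ∈ Finset.Icc v T, mult f i :=
      transpose_eq_sum_mult hm hB hv1 hT1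
    have hvT : v ≤ T := by
      have : f p ≤ f 1 := val_le_top hm hp1
      omega
    have hsplit : ∑ i ∈ Finset.Icc v T, mult f i
        = mult f v + ∑ i ∈ Finset.Icc (v+1) T, mult f i := by
      rw [sum_Icc_split (fun i => mult f i) (show v ≤ v + 1 by omega) hvT]
      rw [Finset.Icc_self, Finset.sum_singleton]
    have hvEven : Even (mult f v) := by
      by_contra hodd
      have hvo : Odd (mult f v) := Nat.not_even_iff_odd.mp hodd
      have hvD : v ∈ Dsymp f := Or.inl hvo
      exact hnc (gp_covered (dsymp_finite hm hB) (dsymp_even_card hm hB) hvD)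
    have htail : Even (∑ i ∈ Finset.Icc (v+1) T, mult f i) := by
      rw [← transpose_eq_sum_mult hm hB (by omega) hT1]
      rw [transpose_parity hm hB, ← dsymp_inter_Ioi]
      exact gp_uncovered (dsymp_finite hm hB) (dsymp_even_card hm hB) hnc
    rw [Nat.even_iff]
    rw [Nat.even_iff] at hvEven htail
    omega

end Side1

section Side2
variable {f : ℕ → ℕ} {M : ℕ}

lemma mem_interval_OE {Δ : Set ℕ} {a b v : ℕ} (hB : Bnd f M)
    (hΔ : Δ = {i | 1 ≤ mult f i ∧ b ≤ i ∧ i ≤ a})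
    (hj : ∃ j, 1 ≤ j ∧ f j = v) (hv1 : 1 ≤ v) (h1 : b ≤ v) (h2 : v ≤ a) : v ∈ Δ := by
  rw [hΔ]
  obtain ⟨j, hj1, hj2⟩ := hj
  exact ⟨mult_attained hB hj1 hv1 hj2, h1, h2⟩

lemma oddset_pos {f : ℕ → ℕ} {M : ℕ} (hB : Bnd f M) {a : ℕ} (ha : a ∈ OddSet f) :
    1 ≤ a := by
  by_contra hc
  have ha0 : a = 0 := by omega
  have : Odd (mult f a) := ha
  rw [ha0, mult_zero hB] at this
  simp at this

/-- `IsLeast` of the J-set of an interval of a special orthogonal partition is odd -/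
lemma least_odd_OE (hm : Mono f) (hB : Bnd f M) (heven : Even ((OddSet f).ncard))
    {Δ : Set ℕ} {p : ℕ} (hI : IsIntervalOE f Δ) (hL : IsLeast (Jset f Δ) p) : Odd p := by
  have hp1 : 1 ≤ p := hL.1.1
  have key : ∃ c, Even (transpose f (c+1)) ∧ transpose f (c+1) = p - 1 := by
    rcases hI with ⟨a, b, hpair, hΔ⟩ | ⟨v, hve, hv0, hnc, hΔ⟩
    · have hfp : f p ∈ Δ := hL.1.2
      rw [hΔ] at hfp
      obtain ⟨_, hbv, hva⟩ := hfp
      have hb1 : 1 ≤ b := oddset_pos hB hpair.2.2.1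
      refine ⟨a, ?_, ?_⟩
      · rw [transpose_parity hm hB]
        exact hpair.2.2.2.1
      · apply transpose_val hm hB (by omega)
        · intro hpp
          by_contra hc
          have hge : f p ≤ f (p-1) := hm hpp (by omega)
          have : p - 1 ∈ Jset f Δ := by
            refine ⟨hpp, mem_interval_OE hB hΔ ⟨p-1, hpp, rfl⟩ (by omega) (by omega) (by omega)⟩
          have := hL.2 this
          omega
        · have e : p - 1 + 1 = p := by omega
          rw [e]; omega
    · have hfp : f p ∈ Δ := hL.1.2
      rw [hΔ, Set.mem_singleton_iff] at hfp
      refine ⟨v, ?_, ?_⟩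
      · rw [transpose_parity hm hB]
        exact gp_uncovered (oddSet_finite hm hB) heven hnc
      · apply transpose_val hm hB (by omega)
        · intro hpp
          by_contra hc
          have hge : f p ≤ f (p-1) := hm hpp (by omega)
          have : p - 1 ∈ Jset f Δ := by
            refine ⟨hpp, ?_⟩
            rw [hΔ, Set.mem_singleton_iff]
            omega
          have := hL.2 this
          omega
        · have e : p - 1 + 1 = p := by omega
          rw [e]; omega
  obtain ⟨c, hc1, hc2⟩ := key
  rw [hc2] at hc1
  rcases hc1 with ⟨w, hw⟩
  exact ⟨w, by omega⟩

/-- `IsGreatest` of the J-set of an interval of a special orthogonal partition is even -/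
lemma greatest_even_OE (hm : Mono f) (hB : Bnd f M) (heven : Even ((OddSet f).ncard))
    {Δ : Set ℕ} {p : ℕ} (hI : IsIntervalOE f Δ) (hG : IsGreatest (Jset f Δ) p) : Even p := by
  have hp1 : 1 ≤ p := hG.1.1
  obtain ⟨T, hT1, hT2⟩ : ∃ T, f 1 ≤ T ∧ M + p + 2 ≤ T :=
    ⟨max (f 1) (M + p + 2), le_max_left _ _, le_max_right _ _⟩
  rcases hI with ⟨a, b, hpair, hΔ⟩ | ⟨v, hve, hv0, hnc, hΔ⟩
  · have hfp : f p ∈ Δ := hG.1.2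
    rw [hΔ] at hfp
    obtain ⟨_, hbv, hva⟩ := hfp
    have hb1 : 1 ≤ b := oddset_pos hB hpair.2.2.1
    have hab : b < a := hpair.1
    have haOdd : Odd (mult f a) := hpair.2.1
    have hbOdd : Odd (mult f b) := hpair.2.2.1
    have htv : transpose f b = p := by
      apply transpose_val hm hB hb1
      · intro _; omega
      · by_contra hc
        have hle : f (p+1) ≤ f p := hm hp1 (by omega)
        have : p + 1 ∈ Jset f Δ := by
          refine ⟨by omega,
            mem_interval_OE hB hΔ ⟨p+1, by omega, rfl⟩ (by omega) (by omega) (by omega)⟩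
        have := hG.2 this
        omega
    have hsum : transpose f b = ∑ i ∈ Finset.Icc b T, mult f i :=
      transpose_eq_sum_mult hm hB hb1 hT1
    have haT : a ≤ T := by
      have hma : 1 ≤ mult f a := by rcases haOdd with ⟨w, hw⟩; omega
      obtain ⟨j, hj1, hj2⟩ := mult_exists hB (by omega) hma
      have hja : f j ≤ f 1 := val_le_top hm hj1
      omega
    have hsplit1 : ∑ i ∈ Finset.Icc b T, mult f i
        = (∑ i ∈ Finset.Icc b (a-1), mult f i) + ∑ i ∈ Finset.Icc a T, mult f i := by
      have e : a - 1 + 1 = a := by omega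
      have hx := sum_Icc_split (fun i => mult f i)
        (show b ≤ (a-1)+1 by omega) (show a - 1 ≤ T by omega)
      rw [e] at hx
      exact hx
    have hsplit2 : ∑ i ∈ Finset.Icc b (a-1), mult f i
        = mult f b + ∑ i ∈ Finset.Icc (b+1) (a-1), mult f i := by
      rw [sum_Icc_split (fun i => mult f i) (show b ≤ b + 1 by omega) (show b ≤ a - 1 by omega)]
      rw [Finset.Icc_self, Finset.sum_singleton]
    have hsplit3 : ∑ i ∈ Finset.Icc a T, mult f i
        = mult f a + ∑ i ∈ Finset.Icc (a+1) T, mult f i := by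
      rw [sum_Icc_split (fun i => mult f i) (show a ≤ a + 1 by omega) haT]
      rw [Finset.Icc_self, Finset.sum_singleton]
    have hint : Even (∑ i ∈ Finset.Icc (b+1) (a-1), mult f i) := by
      apply even_sum_of_forall
      intro i hi
      simp only [Finset.mem_Icc] at hi
      by_contra hodd
      have hio : Odd (mult f i) := Nat.not_even_iff_odd.mp hodd
      have : i ∈ OddSet f ∩ Set.Ioo b a := ⟨hio, by constructor <;> omega⟩
      rw [hpair.2.2.2.2] at this
      exact this
    have htail : Even (∑ i ∈ Finset.Icc (a+1) T, mult f i) := by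
      rw [← transpose_eq_sum_mult hm hB (by omega) hT1]
      rw [transpose_parity hm hB]
      exact hpair.2.2.2.1
    rw [Nat.even_iff]
    rw [Nat.even_iff] at hint htail
    rw [Nat.odd_iff] at haOdd hbOdd
    omega
  · have hfp : f p ∈ Δ := hG.1.2
    rw [hΔ, Set.mem_singleton_iff] at hfp
    have hv1 : 1 ≤ v := hve.pos
    have htv : transpose f v = p := by
      apply transpose_val hm hB hv1
      · intro _; omega
      · by_contra hc
        have hle : f (p+1) ≤ f p := hm hp1 (by omega)
        have : p + 1 ∈ Jset f Δ := by
          refine ⟨by omega, ?_⟩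
          rw [hΔ, Set.mem_singleton_iff]
          omega
        have := hG.2 this
        omega
    have hsum : transpose f v = ∑ i ∈ Finset.Icc v T, mult f i :=
      transpose_eq_sum_mult hm hB hv1 hT1
    have hvT : v ≤ T := by
      have : f p ≤ f 1 := val_le_top hm hp1
      omega
    have hsplit : ∑ i ∈ Finset.Icc v T, mult f i
        = mult f v + ∑ i ∈ Finset.Icc (v+1) T, mult f i := by
      rw [sum_Icc_split (fun i => mult f i) (show v ≤ v + 1 by omega) hvT]
      rw [Finset.Icc_self, Finset.sum_singleton]
    have hvEven : Even (mult f v) := by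
      by_contra hodd
      have hvo : Odd (mult f v) := Nat.not_even_iff_odd.mp hodd
      exact hnc (gp_covered (oddSet_finite hm hB) heven hvo)
    have htail : Even (∑ i ∈ Finset.Icc (v+1) T, mult f i) := by
      rw [← transpose_eq_sum_mult hm hB (by omega) hT1]
      rw [transpose_parity hm hB]
      exact gp_uncovered (oddSet_finite hm hB) heven hnc
    rw [Nat.even_iff]
    rw [Nat.even_iff] at hvEven htail
    omega

end Side2
/-! ### Part 5: drop lemmas -/

/-- parity of the count of indices with value `≥ w`, for `w` strictly inside a pair range -/
lemma count_odd_S {f : ℕ → ℕ} {M : ℕ} (hm : Mono f) (hB : Bnd f M) {a b w : ℕ}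
    (hpair : PairedS f a b) (hwb : b < w) (hwa : w ≤ a) :
    Odd (transpose f w) := by
  have hw1 : 1 ≤ w := by omega
  have ha1 : 1 ≤ a := by omega
  have haOdd : Odd (mult f a) := dsymp_pos_odd hpair.2.1 ha1
  have haT : a ≤ f 1 := by
    have hma : 1 ≤ mult f a := by rcases haOdd with ⟨u, hu⟩; omega
    obtain ⟨j, hj1, hj2⟩ := mult_exists hB ha1 hma
    have := val_le_top hm hj1
    omega
  have hsum : transpose f w = ∑ i ∈ Finset.Icc w (f 1), mult f i :=
    transpose_eq_sum_mult hm hB hw1 (le_refl _)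
  have hsplit1 : ∑ i ∈ Finset.Icc w (f 1), mult f i
      = (∑ i ∈ Finset.Icc w (a-1), mult f i) + ∑ i ∈ Finset.Icc a (f 1), mult f i := by
    have e : a - 1 + 1 = a := by omega
    have hx := sum_Icc_split (fun i => mult f i)
      (show w ≤ (a-1)+1 by omega) (show a - 1 ≤ f 1 by omega)
    rw [e] at hx
    exact hx
  have hsplit2 : ∑ i ∈ Finset.Icc a (f 1), mult f i
      = mult f a + ∑ i ∈ Finset.Icc (a+1) (f 1), mult f i := by
    rw [sum_Icc_split (fun i => mult f i) (show a ≤ a + 1 by omega) haT]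
    rw [Finset.Icc_self, Finset.sum_singleton]
  have hint : Even (∑ i ∈ Finset.Icc w (a-1), mult f i) := by
    apply even_sum_of_forall
    intro i hi
    simp only [Finset.mem_Icc] at hi
    by_contra hodd
    have hio : Odd (mult f i) := Nat.not_even_iff_odd.mp hodd
    have : i ∈ Dsymp f ∩ Set.Ioo b a := ⟨Or.inl hio, by constructor <;> omega⟩
    rw [hpair.2.2.2.2] at this
    exact this
  have htail : Even (∑ i ∈ Finset.Icc (a+1) (f 1), mult f i) := by
    rw [← transpose_eq_sum_mult hm hB (by omega) (le_refl _)]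
    rw [transpose_parity hm hB, ← dsymp_inter_Ioi]
    exact hpair.2.2.2.1
  rw [Nat.odd_iff]
  rw [Nat.even_iff] at hint htail
  rw [Nat.odd_iff] at haOdd
  omega

lemma count_odd_OE {f : ℕ → ℕ} {M : ℕ} (hm : Mono f) (hB : Bnd f M) {a b w : ℕ}
    (hpair : PairedOE f a b) (hwb : b < w) (hwa : w ≤ a) :
    Odd (transpose f w) := by
  have hw1 : 1 ≤ w := by omega
  have ha1 : 1 ≤ a := oddset_pos hB hpair.2.1
  have haOdd : Odd (mult f a) := hpair.2.1
  have haT : a ≤ f 1 := by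
    have hma : 1 ≤ mult f a := by rcases haOdd with ⟨u, hu⟩; omega
    obtain ⟨j, hj1, hj2⟩ := mult_exists hB ha1 hma
    have := val_le_top hm hj1
    omega
  have hsum : transpose f w = ∑ i ∈ Finset.Icc w (f 1), mult f i :=
    transpose_eq_sum_mult hm hB hw1 (le_refl _)
  have hsplit1 : ∑ i ∈ Finset.Icc w (f 1), mult f i
      = (∑ i ∈ Finset.Icc w (a-1), mult f i) + ∑ i ∈ Finset.Icc a (f 1), mult f i := by
    have e : a - 1 + 1 = a := by omega
    have hx := sum_Icc_split (fun i => mult f i)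
      (show w ≤ (a-1)+1 by omega) (show a - 1 ≤ f 1 by omega)
    rw [e] at hx
    exact hx
  have hsplit2 : ∑ i ∈ Finset.Icc a (f 1), mult f i
      = mult f a + ∑ i ∈ Finset.Icc (a+1) (f 1), mult f i := by
    rw [sum_Icc_split (fun i => mult f i) (show a ≤ a + 1 by omega) haT]
    rw [Finset.Icc_self, Finset.sum_singleton]
  have hint : Even (∑ i ∈ Finset.Icc w (a-1), mult f i) := by
    apply even_sum_of_forall
    intro i hi
    simp only [Finset.mem_Icc] at hi
    by_contra hodd
    have hio : Odd (mult f i) := Nat.not_even_iff_odd.mp hodd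
    have : i ∈ OddSet f ∩ Set.Ioo b a := ⟨hio, by constructor <;> omega⟩
    rw [hpair.2.2.2.2] at this
    exact this
  have htail : Even (∑ i ∈ Finset.Icc (a+1) (f 1), mult f i) := by
    rw [← transpose_eq_sum_mult hm hB (by omega) (le_refl _)]
    rw [transpose_parity hm hB]
    exact hpair.2.2.2.1
  rw [Nat.odd_iff]
  rw [Nat.even_iff] at hint htail
  rw [Nat.odd_iff] at haOdd
  omega

section Drops
variable {f1 f2 : ℕ → ℕ} {M : ℕ}

/-- a strict drop of `f1` at an even index `p` with `K p` puts `p` in `J⁻` -/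
lemma drop_even_f1 (h1m : Mono f1) (h1B : Bnd f1 M)
    {p : ℕ} (hp : Even p) (hp1 : 1 ≤ p) (hK1 : Even (f1 p)) (hK2 : Odd (f2 p))
    (hdrop : f1 (p+1) < f1 p) : p ∈ JminusSet f1 f2 := by
  have hv1 : 1 ≤ f1 p := by omega
  have htv : transpose f1 (f1 p) = p :=
    transpose_val h1m h1B hv1 (fun _ => le_refl _) hdrop
  refine ⟨hp1, hK1, hK2, Or.inl ?_⟩
  by_cases hcov : ∃ a b, PairedS f1 a b ∧ b ≤ f1 p ∧ f1 p ≤ a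
  · obtain ⟨a, b, hpair, hbv, hva⟩ := hcov
    by_cases hvb : f1 p = b
    · refine ⟨{i | (i = 0 ∨ 1 ≤ mult f1 i) ∧ b ≤ i ∧ i ≤ a}, Or.inl ⟨a, b, hpair, rfl⟩, ?_, ?_⟩
      · exact ⟨hp1, mem_interval_S h1B rfl ⟨p, hp1, rfl⟩ hbv hva⟩
      · rintro j ⟨hj1, hjΔ⟩
        by_contra hc
        have : f1 j ≤ f1 (p+1) := h1m (by omega) (by omega)
        have hb : b ≤ f1 j := hjΔ.2.1
        omega
    · exfalso
      have hodd : Odd (transpose f1 (f1 p)) := count_odd_S h1m h1B hpair (by omega) hva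
      rw [htv] at hodd
      rw [Nat.odd_iff] at hodd
      rw [Nat.even_iff] at hp
      omega
  · refine ⟨{f1 p}, Or.inr ⟨f1 p, hK1, Or.inr ⟨?_, mult_attained h1B hp1 hv1 rfl⟩, hcov, rfl⟩,
      ?_, ?_⟩
    · rcases hK1 with ⟨w, hw⟩; omega
    · exact ⟨hp1, rfl⟩
    · rintro j ⟨hj1, hjΔ⟩
      rw [Set.mem_singleton_iff] at hjΔ
      by_contra hc
      have : f1 j ≤ f1 (p+1) := h1m (by omega) (by omega)
      omega

/-- a strict drop of `f1` into an odd index `p` with `K p` puts `p` in `J⁺` -/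
lemma drop_odd_f1 (h1m : Mono f1) (h1B : Bnd f1 M)
    {p : ℕ} (hp : Odd p) (hp2 : 2 ≤ p) (hK1 : Even (f1 p)) (hK2 : Odd (f2 p))
    (hdrop : f1 p < f1 (p-1)) : p ∈ JplusSet f1 f2 := by
  have hp1 : 1 ≤ p := by omega
  have htv : transpose f1 (f1 p + 1) = p - 1 := by
    apply transpose_val h1m h1B (by omega)
    · intro _; omega
    · have e : p - 1 + 1 = p := by omega
      rw [e]; omega
  refine ⟨hp1, hK1, hK2, Or.inl ?_⟩
  by_cases hcov : ∃ a b, PairedS f1 a b ∧ b ≤ f1 p ∧ f1 p ≤ a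
  · obtain ⟨a, b, hpair, hbv, hva⟩ := hcov
    by_cases hva' : f1 p = a
    · refine ⟨{i | (i = 0 ∨ 1 ≤ mult f1 i) ∧ b ≤ i ∧ i ≤ a}, Or.inl ⟨a, b, hpair, rfl⟩, ?_, ?_⟩
      · exact ⟨hp1, mem_interval_S h1B rfl ⟨p, hp1, rfl⟩ hbv hva⟩
      · rintro j ⟨hj1, hjΔ⟩
        by_contra hc
        have : f1 (p-1) ≤ f1 j := h1m hj1 (by omega)
        have ha : f1 j ≤ a := hjΔ.2.2
        omega
    · exfalso
      have hodd : Odd (transpose f1 (f1 p + 1)) :=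
        count_odd_S h1m h1B hpair (by omega) (by omega)
      rw [htv] at hodd
      rw [Nat.odd_iff] at hodd hp
      omega
  · have hv0 : f1 p = 0 ∨ (2 ≤ f1 p ∧ 1 ≤ mult f1 (f1 p)) := by
      rcases Nat.eq_zero_or_pos (f1 p) with h | h
      · exact Or.inl h
      · refine Or.inr ⟨?_, mult_attained h1B hp1 h rfl⟩
        rcases hK1 with ⟨w, hw⟩; omega
    refine ⟨{f1 p}, Or.inr ⟨f1 p, hK1, hv0, hcov, rfl⟩, ⟨hp1, rfl⟩, ?_⟩
    rintro j ⟨hj1, hjΔ⟩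
    rw [Set.mem_singleton_iff] at hjΔ
    by_contra hc
    have : f1 (p-1) ≤ f1 j := h1m hj1 (by omega)
    omega

/-- a strict drop of `f2` at an even index `p` with `K p` puts `p` in `J⁻` -/
lemma drop_even_f2 (h2m : Mono f2) (h2B : Bnd f2 M)
    {p : ℕ} (hp : Even p) (hp1 : 1 ≤ p) (hK1 : Even (f1 p)) (hK2 : Odd (f2 p))
    (hdrop : f2 (p+1) < f2 p) : p ∈ JminusSet f1 f2 := by
  have hv1 : 1 ≤ f2 p := hK2.pos
  have htv : transpose f2 (f2 p) = p :=
    transpose_val h2m h2B hv1 (fun _ => le_refl _) hdrop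
  refine ⟨hp1, hK1, hK2, Or.inr ?_⟩
  by_cases hcov : ∃ a b, PairedOE f2 a b ∧ b ≤ f2 p ∧ f2 p ≤ a
  · obtain ⟨a, b, hpair, hbv, hva⟩ := hcov
    by_cases hvb : f2 p = b
    · refine ⟨{i | 1 ≤ mult f2 i ∧ b ≤ i ∧ i ≤ a}, Or.inl ⟨a, b, hpair, rfl⟩, ?_, ?_⟩
      · exact ⟨hp1, mem_interval_OE h2B rfl ⟨p, hp1, rfl⟩ hv1 hbv hva⟩
      · rintro j ⟨hj1, hjΔ⟩
        by_contra hc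
        have : f2 j ≤ f2 (p+1) := h2m (by omega) (by omega)
        have hb : b ≤ f2 j := hjΔ.2.1
        omega
    · exfalso
      have hodd : Odd (transpose f2 (f2 p)) := count_odd_OE h2m h2B hpair (by omega) hva
      rw [htv] at hodd
      rw [Nat.odd_iff] at hodd
      rw [Nat.even_iff] at hp
      omega
  · refine ⟨{f2 p}, Or.inr ⟨f2 p, hK2, mult_attained h2B hp1 hv1 rfl, hcov, rfl⟩,
      ⟨hp1, rfl⟩, ?_⟩
    rintro j ⟨hj1, hjΔ⟩
    rw [Set.mem_singleton_iff] at hjΔ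
    by_contra hc
    have : f2 j ≤ f2 (p+1) := h2m (by omega) (by omega)
    omega

/-- a strict drop of `f2` into an odd index `p` with `K p` puts `p` in `J⁺` -/
lemma drop_odd_f2 (h2m : Mono f2) (h2B : Bnd f2 M)
    {p : ℕ} (hp : Odd p) (hp2 : 2 ≤ p) (hK1 : Even (f1 p)) (hK2 : Odd (f2 p))
    (hdrop : f2 p < f2 (p-1)) : p ∈ JplusSet f1 f2 := by
  have hp1 : 1 ≤ p := by omega
  have hv1 : 1 ≤ f2 p := hK2.pos
  have htv : transpose f2 (f2 p + 1) = p - 1 := by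
    apply transpose_val h2m h2B (by omega)
    · intro _; omega
    · have e : p - 1 + 1 = p := by omega
      rw [e]; omega
  refine ⟨hp1, hK1, hK2, Or.inr ?_⟩
  by_cases hcov : ∃ a b, PairedOE f2 a b ∧ b ≤ f2 p ∧ f2 p ≤ a
  · obtain ⟨a, b, hpair, hbv, hva⟩ := hcov
    by_cases hva' : f2 p = a
    · refine ⟨{i | 1 ≤ mult f2 i ∧ b ≤ i ∧ i ≤ a}, Or.inl ⟨a, b, hpair, rfl⟩, ?_, ?_⟩
      · exact ⟨hp1, mem_interval_OE h2B rfl ⟨p, hp1, rfl⟩ hv1 hbv hva⟩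
      · rintro j ⟨hj1, hjΔ⟩
        by_contra hc
        have : f2 (p-1) ≤ f2 j := h2m hj1 (by omega)
        have ha : f2 j ≤ a := hjΔ.2.2
        omega
    · exfalso
      have hodd : Odd (transpose f2 (f2 p + 1)) :=
        count_odd_OE h2m h2B hpair (by omega) (by omega)
      rw [htv] at hodd
      rw [Nat.odd_iff] at hodd hp
      omega
  · refine ⟨{f2 p}, Or.inr ⟨f2 p, hK2, mult_attained h2B hp1 hv1 rfl, hcov, rfl⟩,
      ⟨hp1, rfl⟩, ?_⟩
    rintro j ⟨hj1, hjΔ⟩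
    rw [Set.mem_singleton_iff] at hjΔ
    by_contra hc
    have : f2 (p-1) ≤ f2 j := h2m hj1 (by omega)
    omega

end Drops
/-! ### Part 6: exact characterization of the partial sums of ξ -/

def OpenJ (Js : Set ℕ) (p : ℕ) : Prop :=
  (∃ j, IsLeast Js j ∧ j ≤ p) ∧ ∀ j, IsGreatest Js j → p < j

def Psi (f1 f2 : ℕ → ℕ) (p : ℕ) : Prop :=
  (Even (f1 p) ∧ Odd (f2 p)) ∧ (Even (f1 (p+1)) ∧ Odd (f2 (p+1))) ∧
  (Even p → f1 p = f1 (p+1) ∧ f2 p = f2 (p+1)) ∧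
  ((∃ Δ, IsIntervalS f1 Δ ∧ OpenJ (Jset f1 Δ) p) ∨
   (∃ Δ, IsIntervalOE f2 Δ ∧ OpenJ (Jset f2 Δ) p))

lemma Sz_zero (f : ℕ → ℤ) : Sz f 0 = 0 := by simp [Sz]

lemma Sz_succ (f : ℕ → ℤ) (k : ℕ) : Sz f (k+1) = Sz f k + f (k+1) := by
  rw [Sz, Sz, Finset.sum_Icc_succ_top (by omega)]

lemma xi_plus {f1 f2 : ℕ → ℕ} {q : ℕ} (h : q ∈ JplusSet f1 f2) : xi f1 f2 q = 1 := by
  unfold xi; rw [if_pos h]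

lemma xi_minus {f1 f2 : ℕ → ℕ} {q : ℕ} (h1 : q ∉ JplusSet f1 f2)
    (h2 : q ∈ JminusSet f1 f2) : xi f1 f2 q = -1 := by
  unfold xi; rw [if_neg h1, if_pos h2]

lemma xi_zero' {f1 f2 : ℕ → ℕ} {q : ℕ} (h1 : q ∉ JplusSet f1 f2)
    (h2 : q ∉ JminusSet f1 f2) : xi f1 f2 q = 0 := by
  unfold xi; rw [if_neg h1, if_neg h2]

lemma exists_least {s : Set ℕ} (h : s.Nonempty) : ∃ j, IsLeast s j :=
  ⟨sInf s, Nat.sInf_mem h, fun _ hx => Nat.sInf_le hx⟩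

section MainChar
variable {f1 f2 : ℕ → ℕ} {M : ℕ}

lemma jplus_odd (h1m : Mono f1) (h1B : Bnd f1 M) (h2m : Mono f2) (h2B : Bnd f2 M)
    (heven2 : Even ((OddSet f2).ncard)) {q : ℕ} (h : q ∈ JplusSet f1 f2) : Odd q := by
  rcases h.2.2.2 with ⟨Δ, hI, hL⟩ | ⟨Δ, hI, hL⟩
  · exact least_odd_S h1m h1B hI hL
  · exact least_odd_OE h2m h2B heven2 hI hL

lemma jminus_even (h1m : Mono f1) (h1B : Bnd f1 M) (h2m : Mono f2) (h2B : Bnd f2 M)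
    (heven2 : Even ((OddSet f2).ncard)) {q : ℕ} (h : q ∈ JminusSet f1 f2) : Even q := by
  rcases h.2.2.2 with ⟨Δ, hI, hG⟩ | ⟨Δ, hI, hG⟩
  · exact greatest_even_S h1m h1B hI hG
  · exact greatest_even_OE h2m h2B heven2 hI hG

theorem main_char (h1m : Mono f1) (h1B : Bnd f1 M) (h2m : Mono f2) (h2B : Bnd f2 M)
    (h1sp : SpecialPairs f1) (h2sp : SpecialPairs f2)
    (heven2 : Even ((OddSet f2).ncard)) :
    ∀ p, (Psi f1 f2 p → Sz (xi f1 f2) p = 1) ∧ (¬ Psi f1 f2 p → Sz (xi f1 f2) p = 0) := by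
  have hpsi_least : ∀ p, Psi f1 f2 p →
      ∃ j, j ≤ p ∧ ((∃ Δ, IsIntervalS f1 Δ ∧ IsLeast (Jset f1 Δ) j ∧ OpenJ (Jset f1 Δ) p) ∨
        (∃ Δ, IsIntervalOE f2 Δ ∧ IsLeast (Jset f2 Δ) j ∧ OpenJ (Jset f2 Δ) p)) := by
    intro p hpsi
    rcases hpsi.2.2.2 with ⟨Δ, hI, hO⟩ | ⟨Δ, hI, hO⟩
    · obtain ⟨j, hLj, hjp⟩ := hO.1
      exact ⟨j, hjp, Or.inl ⟨Δ, hI, hLj, hO⟩⟩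
    · obtain ⟨j, hLj, hjp⟩ := hO.1
      exact ⟨j, hjp, Or.inr ⟨Δ, hI, hLj, hO⟩⟩
  intro p
  induction p with
  | zero =>
    refine ⟨fun hpsi => ?_, fun _ => Sz_zero _⟩
    exfalso
    obtain ⟨j, hj0, hj⟩ := hpsi_least 0 hpsi
    have hj1 : 1 ≤ j := by
      rcases hj with ⟨Δ, _, hL, _⟩ | ⟨Δ, _, hL, _⟩ <;> exact hL.1.1
    omega
  | succ p ih =>
    set q := p + 1 with hq
    by_cases hqp : q ∈ JplusSet f1 f2
    · -- ξ_q = 1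
      have hxiq : xi f1 f2 q = 1 := xi_plus hqp
      have hq_odd : Odd q := jplus_odd h1m h1B h2m h2B heven2 hqp
      have hKq1 : Even (f1 q) := hqp.2.1
      have hKq2 : Odd (f2 q) := hqp.2.2.1
      -- Psi p fails
      have hnpsi_p : ¬ Psi f1 f2 p := by
        intro hpsi
        rcases Nat.eq_zero_or_pos p with rfl | hp1
        · obtain ⟨j, hj0, hj⟩ := hpsi_least 0 hpsi
          have hj1 : 1 ≤ j := by
            rcases hj with ⟨Δ, _, hL, _⟩ | ⟨Δ, _, hL, _⟩ <;> exact hL.1.1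
          omega
        · have hp_even : Even p := by
            rcases hq_odd with ⟨w, hw⟩
            exact ⟨w, by omega⟩
          obtain ⟨hc1, hc2⟩ := hpsi.2.2.1 hp_even
          rcases hqp.2.2.2 with ⟨Δ, hI, hL⟩ | ⟨Δ, hI, hL⟩
          · have : p ∈ Jset f1 Δ := ⟨hp1, by rw [hc1]; exact hL.1.2⟩
            have := hL.2 this
            omega
          · have : p ∈ Jset f2 Δ := ⟨hp1, by rw [hc2]; exact hL.1.2⟩
            have := hL.2 this
            omega
      have hSz : Sz (xi f1 f2) q = 1 := by
        rw [Sz_succ, ih.2 hnpsi_p, hxiq]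
        ring
      -- Psi q holds
      have hpsi_q : Psi f1 f2 q := by
        refine ⟨⟨hKq1, hKq2⟩, ⟨?_, ?_⟩, ?_, ?_⟩
        · have := sp_pair h1sp hq_odd
          rw [Nat.even_iff] at hKq1 ⊢
          omega
        · have := sp_pair h2sp hq_odd
          rw [Nat.odd_iff] at hKq2 ⊢
          omega
        · intro he
          exact absurd he (Nat.not_even_iff_odd.mpr hq_odd)
        · rcases hqp.2.2.2 with ⟨Δ, hI, hL⟩ | ⟨Δ, hI, hL⟩
          · refine Or.inl ⟨Δ, hI, ⟨q, hL, le_refl q⟩, ?_⟩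
            intro j hGj
            by_contra hc
            have hjq : q ≤ j := hL.2 hGj.1
            have hjq2 : j = q := by omega
            rw [hjq2] at hGj
            have := greatest_even_S h1m h1B hI hGj
            rw [Nat.even_iff] at this
            rw [Nat.odd_iff] at hq_odd
            omega
          · refine Or.inr ⟨Δ, hI, ⟨q, hL, le_refl q⟩, ?_⟩
            intro j hGj
            by_contra hc
            have hjq : q ≤ j := hL.2 hGj.1
            have hjq2 : j = q := by omega
            rw [hjq2] at hGj
            have := greatest_even_OE h2m h2B heven2 hI hGj
            rw [Nat.even_iff] at this
            rw [Nat.odd_iff] at hq_odd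
            omega
      exact ⟨fun _ => hSz, fun hn => absurd hpsi_q hn⟩
    · by_cases hqm : q ∈ JminusSet f1 f2
      · -- ξ_q = -1
        have hxiq : xi f1 f2 q = -1 := xi_minus hqp hqm
        have hq_even : Even q := jminus_even h1m h1B h2m h2B heven2 hqm
        have hKq1 : Even (f1 q) := hqm.2.1
        have hKq2 : Odd (f2 q) := hqm.2.2.1
        have hp1 : 1 ≤ p := by
          rcases hq_even with ⟨w, hw⟩
          omega
        have hp_odd : Odd p := by
          rcases hq_even with ⟨w, hw⟩
          exact ⟨w - 1, by omega⟩
        -- Psi p holds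
        have hpsi_p : Psi f1 f2 p := by
          refine ⟨⟨?_, ?_⟩, ⟨hKq1, hKq2⟩, ?_, ?_⟩
          · have := sp_pair h1sp hp_odd
            rw [← hq] at this
            rw [Nat.even_iff] at hKq1 ⊢
            omega
          · have := sp_pair h2sp hp_odd
            rw [← hq] at this
            rw [Nat.odd_iff] at hKq2 ⊢
            omega
          · intro he
            exact absurd he (Nat.not_even_iff_odd.mpr hp_odd)
          · rcases hqm.2.2.2 with ⟨Δ, hI, hG⟩ | ⟨Δ, hI, hG⟩
            · obtain ⟨j0, hLj0⟩ := exists_least ⟨q, hG.1⟩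
              have hj0_odd : Odd j0 := least_odd_S h1m h1B hI hLj0
              have hj0q : j0 ≤ q := hLj0.2 hG.1
              refine Or.inl ⟨Δ, hI, ⟨j0, hLj0, ?_⟩, ?_⟩
              · rw [Nat.odd_iff] at hj0_odd
                rw [Nat.even_iff] at hq_even
                omega
              · intro j hGj
                have := hGj.2 hG.1
                omega
            · obtain ⟨j0, hLj0⟩ := exists_least ⟨q, hG.1⟩
              have hj0_odd : Odd j0 := least_odd_OE h2m h2B heven2 hI hLj0
              have hj0q : j0 ≤ q := hLj0.2 hG.1
              refine Or.inr ⟨Δ, hI, ⟨j0, hLj0, ?_⟩, ?_⟩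
              · rw [Nat.odd_iff] at hj0_odd
                rw [Nat.even_iff] at hq_even
                omega
              · intro j hGj
                have := hGj.2 hG.1
                omega
        have hSz : Sz (xi f1 f2) q = 0 := by
          rw [Sz_succ, ih.1 hpsi_p, hxiq]
          ring
        -- Psi q fails
        have hnpsi_q : ¬ Psi f1 f2 q := by
          intro hpsi
          obtain ⟨hc1, hc2⟩ := hpsi.2.2.1 hq_even
          rcases hqm.2.2.2 with ⟨Δ, hI, hG⟩ | ⟨Δ, hI, hG⟩
          · have : q + 1 ∈ Jset f1 Δ := ⟨by omega, by rw [← hc1]; exact hG.1.2⟩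
            have := hG.2 this
            omega
          · have : q + 1 ∈ Jset f2 Δ := ⟨by omega, by rw [← hc2]; exact hG.1.2⟩
            have := hG.2 this
            omega
        exact ⟨fun h => absurd h hnpsi_q, fun _ => hSz⟩
      · -- ξ_q = 0
        have hxiq : xi f1 f2 q = 0 := xi_zero' hqp hqm
        have hSz : Sz (xi f1 f2) q = Sz (xi f1 f2) p := by
          rw [Sz_succ, hxiq]
          ring
        have hiff : Psi f1 f2 q ↔ Psi f1 f2 p := by
          constructor
          · -- backward transfer
            intro hpsi
            have hKq1 : Even (f1 q) := hpsi.1.1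
            have hKq2 : Odd (f2 q) := hpsi.1.2
            have hp1 : 1 ≤ p := by
              by_contra hc
              have hp0 : p = 0 := by omega
              -- then q = 1, the least of the open witness must be 1 = q, giving q ∈ J⁺
              obtain ⟨j, hjq, hj⟩ := hpsi_least q hpsi
              have hj1 : 1 ≤ j := by
                rcases hj with ⟨Δ, _, hL, _⟩ | ⟨Δ, _, hL, _⟩ <;> exact hL.1.1
              have hjq' : j = q := by omega
              rcases hj with ⟨Δ, hI, hL, _⟩ | ⟨Δ, hI, hL, _⟩
              · exact hqp ⟨by omega, hKq1, hKq2, Or.inl ⟨Δ, hI, by rwa [hjq'] at hL⟩⟩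
              · exact hqp ⟨by omega, hKq1, hKq2, Or.inr ⟨Δ, hI, by rwa [hjq'] at hL⟩⟩
            -- the least of the witness is < q
            obtain ⟨j, hjq, hj⟩ := hpsi_least q hpsi
            have hjp : j ≤ p := by
              by_contra hc
              have hjq' : j = q := by omega
              rcases hj with ⟨Δ, hI, hL, _⟩ | ⟨Δ, hI, hL, _⟩
              · exact hqp ⟨by omega, hKq1, hKq2, Or.inl ⟨Δ, hI, by rwa [hjq'] at hL⟩⟩
              · exact hqp ⟨by omega, hKq1, hKq2, Or.inr ⟨Δ, hI, by rwa [hjq'] at hL⟩⟩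
            have hOpen_p : (∃ Δ, IsIntervalS f1 Δ ∧ OpenJ (Jset f1 Δ) p) ∨
                (∃ Δ, IsIntervalOE f2 Δ ∧ OpenJ (Jset f2 Δ) p) := by
              rcases hj with ⟨Δ, hI, hL, hO⟩ | ⟨Δ, hI, hL, hO⟩
              · refine Or.inl ⟨Δ, hI, ⟨j, hL, hjp⟩, fun j' hGj' => lt_of_le_of_lt
                  (by omega : p ≤ q) (hO.2 j' hGj')⟩
              · refine Or.inr ⟨Δ, hI, ⟨j, hL, hjp⟩, fun j' hGj' => lt_of_le_of_lt
                  (by omega : p ≤ q) (hO.2 j' hGj')⟩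
            rcases Nat.even_or_odd q with hq_even | hq_odd
            · -- q even, p odd
              have hp_odd : Odd p := by
                rcases hq_even with ⟨w, hw⟩
                exact ⟨w-1, by omega⟩
              refine ⟨⟨?_, ?_⟩, hpsi.1, ?_, hOpen_p⟩
              · have := sp_pair h1sp hp_odd
                rw [← hq] at this
                rw [Nat.even_iff] at hKq1 ⊢
                omega
              · have := sp_pair h2sp hp_odd
                rw [← hq] at this
                rw [Nat.odd_iff] at hKq2 ⊢
                omega
              · intro he
                exact absurd he (Nat.not_even_iff_odd.mpr hp_odd)
            · -- q odd, p even: need no drop across p → q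
              have hq2 : 2 ≤ q := by omega
              have hc1 : f1 p = f1 q := by
                have hle : f1 q ≤ f1 p := h1m hp1 (by omega)
                by_contra hc
                have hdrop : f1 q < f1 (q-1) := by
                  have e : q - 1 = p := by omega
                  rw [e]; omega
                exact hqp (drop_odd_f1 h1m h1B hq_odd hq2 hKq1 hKq2 hdrop)
              have hc2 : f2 p = f2 q := by
                have hle : f2 q ≤ f2 p := h2m hp1 (by omega)
                by_contra hc
                have hdrop : f2 q < f2 (q-1) := by
                  have e : q - 1 = p := by omega
                  rw [e]; omega
                exact hqp (drop_odd_f2 h2m h2B hq_odd hq2 hKq1 hKq2 hdrop)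
              refine ⟨⟨by rwa [hc1], by rwa [hc2]⟩, hpsi.1, ?_, hOpen_p⟩
              intro _
              exact ⟨hc1, hc2⟩
          · -- forward transfer
            intro hpsi
            have hKq1 : Even (f1 q) := hpsi.2.1.1
            have hKq2 : Odd (f2 q) := hpsi.2.1.2
            have hOpen_q : (∃ Δ, IsIntervalS f1 Δ ∧ OpenJ (Jset f1 Δ) q) ∨
                (∃ Δ, IsIntervalOE f2 Δ ∧ OpenJ (Jset f2 Δ) q) := by
              obtain ⟨j, hjp, hj⟩ := hpsi_least p hpsi
              rcases hj with ⟨Δ, hI, hL, hO⟩ | ⟨Δ, hI, hL, hO⟩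
              · refine Or.inl ⟨Δ, hI, ⟨j, hL, by omega⟩, ?_⟩
                intro j' hGj'
                by_contra hc
                have h1' : p < j' := hO.2 j' hGj'
                have hj'q : j' = q := by omega
                rw [hj'q] at hGj'
                exact hqm ⟨by omega, hKq1, hKq2, Or.inl ⟨Δ, hI, hGj'⟩⟩
              · refine Or.inr ⟨Δ, hI, ⟨j, hL, by omega⟩, ?_⟩
                intro j' hGj'
                by_contra hc
                have h1' : p < j' := hO.2 j' hGj'
                have hj'q : j' = q := by omega
                rw [hj'q] at hGj'
                exact hqm ⟨by omega, hKq1, hKq2, Or.inr ⟨Δ, hI, hGj'⟩⟩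
            rcases Nat.even_or_odd q with hq_even | hq_odd
            · -- q even: no drop across q → q+1
              have hc1 : f1 q = f1 (q+1) := by
                have hle : f1 (q+1) ≤ f1 q := h1m (by omega) (by omega)
                by_contra hc
                exact hqm (drop_even_f1 h1m h1B hq_even (by omega) hKq1 hKq2 (by omega))
              have hc2 : f2 q = f2 (q+1) := by
                have hle : f2 (q+1) ≤ f2 q := h2m (by omega) (by omega)
                by_contra hc
                exact hqm (drop_even_f2 h2m h2B hq_even (by omega) hKq1 hKq2 (by omega))
              exact ⟨⟨hKq1, hKq2⟩, ⟨by rwa [← hc1], by rwa [← hc2]⟩,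
                fun _ => ⟨hc1, hc2⟩, hOpen_q⟩
            · -- q odd
              refine ⟨⟨hKq1, hKq2⟩, ⟨?_, ?_⟩, ?_, hOpen_q⟩
              · have := sp_pair h1sp hq_odd
                rw [Nat.even_iff] at hKq1 ⊢
                omega
              · have := sp_pair h2sp hq_odd
                rw [Nat.odd_iff] at hKq2 ⊢
                omega
              · intro he
                exact absurd he (Nat.not_even_iff_odd.mpr hq_odd)
        constructor
        · intro h
          rw [hSz]
          exact ih.1 (hiff.mp h)
        · intro h
          rw [hSz]
          exact ih.2 (fun hp => h (hiff.mpr hp))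

end MainChar
/-! ### Part 7: the union with (1), and the core inequality -/

lemma bnd_mono {f : ℕ → ℕ} {M M' : ℕ} (hB : Bnd f M) (h : M ≤ M') : Bnd f M' :=
  fun j hj => hB j (by omega)

lemma transpose_le_index_bound {f : ℕ → ℕ} {M : ℕ} (hB : Bnd f M) {i : ℕ} (hi : 1 ≤ i) :
    transpose f i ≤ M := by
  rw [transpose_apply hB hi]
  calc ((Finset.Icc 1 M).filter _).card ≤ (Finset.Icc 1 M).card :=
        Finset.card_le_card (Finset.filter_subset _ _)
    _ = M := by rw [Nat.card_Icc]; omega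

lemma S_congr {f g : ℕ → ℕ} (h : ∀ j, 1 ≤ j → f j = g j) (k : ℕ) : S f k = S g k := by
  unfold S
  apply Finset.sum_congr rfl
  intro j hj
  simp only [Finset.mem_Icc] at hj
  exact h j hj.1

lemma one1_one : one1 1 = 1 := rfl

lemma one1_ge_two {i : ℕ} (hi : 2 ≤ i) : one1 i = 0 := by
  unfold one1
  rw [if_neg (by omega)]

lemma mono_one1 : Mono one1 := by
  intro j k hj hjk
  unfold one1
  split <;> split <;> omega

lemma bnd_one1 : Bnd one1 1 := fun j hj => one1_ge_two (by omega)

lemma transpose_one1 : transpose one1 = one1 := by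
  funext j
  unfold transpose one1
  rcases Nat.eq_zero_or_pos j with rfl | hj
  · rw [if_neg (by omega)]
    convert Set.ncard_empty ℕ
    ext i; simp
  rcases Nat.lt_or_ge j 2 with hj2 | hj2
  · have hj1 : j = 1 := by omega
    subst hj1
    rw [if_pos rfl]
    have : {i : ℕ | 1 ≤ i ∧ 1 ≤ 1 ∧ 1 ≤ if i = 1 then 1 else 0} = {1} := by
      ext i
      simp only [Set.mem_setOf_eq, Set.mem_singleton_iff]
      constructor
      · rintro ⟨h1, _, h3⟩
        by_contra hc
        rw [if_neg hc] at h3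
        omega
      · rintro rfl
        exact ⟨le_refl 1, le_refl 1, by rw [if_pos rfl]⟩
    rw [this, Set.ncard_singleton]
  · rw [if_neg (by omega)]
    have : {i : ℕ | 1 ≤ i ∧ 1 ≤ j ∧ j ≤ if i = 1 then 1 else 0} = ∅ := by
      ext i
      simp only [Set.mem_setOf_eq, Set.mem_empty_iff_false, iff_false]
      rintro ⟨h1, h2, h3⟩
      split at h3 <;> omega
    rw [this, Set.ncard_empty]

section UnionOne
variable {f : ℕ → ℕ} {M : ℕ}

/-- the two sum expressions -/
lemma S_union_one1_expr (hm : Mono f) (hB : Bnd f M) (p : ℕ) :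
    S (unionP f one1) p
      = min (transpose f 1 + 1) p + ∑ i ∈ Finset.Icc 2 (f 1 + 1), min (transpose f i) p
    ∧ S f p = min (transpose f 1) p + ∑ i ∈ Finset.Icc 2 (f 1 + 1), min (transpose f i) p := by
  have hBw : Bnd (fun i => transpose f i + transpose one1 i) (f 1 + 1) := by
    intro i hi
    have h1 := transpose_bnd hm hB i (by omega)
    have h2 := bnd_one1 i (by omega)
    rw [transpose_one1]
    simp only [h1, h2]
  have hBt : Bnd (transpose f) (f 1 + 1) := bnd_mono (transpose_bnd hm hB) (by omega)
  constructor
  · rw [unionP, S_transpose hBw]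
    rw [sum_Icc_split _ (show 1 ≤ 1 + 1 by omega) (show 1 ≤ f 1 + 1 by omega)]
    rw [Finset.Icc_self, Finset.sum_singleton]
    rw [transpose_one1]
    have ht : ∑ i ∈ Finset.Icc (1+1) (f 1 + 1), min (transpose f i + one1 i) p
        = ∑ i ∈ Finset.Icc 2 (f 1 + 1), min (transpose f i) p := by
      apply Finset.sum_congr (by norm_num)
      intro i hi
      simp only [Finset.mem_Icc] at hi
      rw [one1_ge_two hi.1, Nat.add_zero]
    rw [ht, one1_one]
  · have he : S f p = S (transpose (transpose f)) p :=
      (S_congr (fun j hj => (transpose_transpose hm hB hj).symm) p)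
    rw [he, S_transpose hBt]
    rw [sum_Icc_split _ (show 1 ≤ 1 + 1 by omega) (show 1 ≤ f 1 + 1 by omega)]
    rw [Finset.Icc_self, Finset.sum_singleton]

lemma S_union_one1_of_pos (hm : Mono f) (hB : Bnd f M) {p : ℕ} (hp : 1 ≤ p)
    (hfp : 1 ≤ f p) : S (unionP f one1) p = S f p := by
  obtain ⟨h1, h2⟩ := S_union_one1_expr hm hB p
  have : p ≤ transpose f 1 := (transpose_galois hm hB (le_refl 1) hp).mpr hfp
  rw [h1, h2]
  omega

lemma S_union_one1_of_zero (hm : Mono f) (hB : Bnd f M) {p : ℕ} (hp : 1 ≤ p)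
    (hfp : f p = 0) : S (unionP f one1) p = S f p + 1 := by
  obtain ⟨h1, h2⟩ := S_union_one1_expr hm hB p
  have : ¬ (p ≤ transpose f 1) := by
    intro hc
    have := (transpose_galois hm hB (le_refl 1) hp).mp hc
    omega
  rw [h1, h2]
  omega

lemma S_le_union_one1 (hm : Mono f) (hB : Bnd f M) (p : ℕ) :
    S f p ≤ S (unionP f one1) p := by
  obtain ⟨h1, h2⟩ := S_union_one1_expr hm hB p
  rw [h1, h2]
  have : min (transpose f 1) p ≤ min (transpose f 1 + 1) p := by omega
  omega

/-- total: the union with `(1)` is a partition of `S f M + 1`. -/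
lemma union_one1_partition (hm : Mono f) (hB : Bnd f M) :
    IsPartition (unionP f one1) (S f M + 1) := by
  have hBw : Bnd (fun i => transpose f i + transpose one1 i) (f 1 + 1) := by
    intro i hi
    have h1 := transpose_bnd hm hB i (by omega)
    have h2 := bnd_one1 i (by omega)
    rw [transpose_one1]
    simp only [h1, h2]
  have hmw : Mono (fun i => transpose f i + transpose one1 i) := by
    intro j k hj hjk
    exact Nat.add_le_add (transpose_mono f hB hj hjk) (transpose_mono one1 bnd_one1 hj hjk)
  have := partition_transpose hmw hBw
  have htot : S (fun i => transpose f i + transpose one1 i) (f 1 + 1) = S f M + 1 := by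
    rw [S_add]
    congr 1
    · exact S_transpose_total hB (fun i hi1 hiM => by
        have := val_le_top hm hi1
        omega)
    · rw [transpose_one1]
      have : S one1 (f 1 + 1) = S one1 1 := by
        apply S_stable bnd_one1 (by omega)
      rw [this]
      rfl
  rw [htot] at this
  exact this

end UnionOne

/-- the core inequality (♣) -/
lemma club {f1 f2 d1 d2 : ℕ → ℕ} {M n1 n2 : ℕ}
    (h1m : Mono f1) (h1B : Bnd f1 M) (h1sp : SpecialPairs f1)
    (h2m : Mono f2) (h2B : Bnd f2 M) (h2sp : SpecialPairs f2)
    (heven2 : Even ((OddSet f2).ncard))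
    (hd1P : IsPartition d1 (2*n1+1)) (hd1B : Bnd d1 M) (hd1o : Orth d1)
    (hd1dom : Dom d1 (transpose (unionP f1 one1)))
    (hd2P : IsPartition d2 (2*n2)) (hd2B : Bnd d2 M) (hd2o : Orth d2)
    (hd2dom : Dom d2 (transpose f2))
    (hf1tot : S f1 M = 2*n1) (hf2tot : S f2 M = 2*n2) :
    ∀ p, (S f1 p + S f2 p : ℤ) + Sz (xi f1 f2) p
      ≤ (S (transpose d1) p + S (transpose d2) p : ℤ) := by
  -- dominance transfers
  have hU1P : IsPartition (unionP f1 one1) (2*n1+1) := by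
    have := union_one1_partition h1m h1B
    rwa [hf1tot] at this
  have hU1m : Mono (unionP f1 one1) := hU1P.mono
  obtain ⟨MU, hU1B⟩ := hU1P.fin
  have hT1 : ∀ p, S (unionP f1 one1) p ≤ S (transpose d1) p := by
    intro p
    have h := dom_transpose hd1P.mono hd1B (S_total hd1P hd1B)
      (transpose_bnd hU1m hU1B) (by
        have : S (transpose (unionP f1 one1)) (unionP f1 one1 1) = S (unionP f1 one1) MU := by
          apply S_transpose_total hU1B
          intro i hi1 hiM
          exact val_le_top hU1m hi1
        rw [this]
        exact S_total hU1P hU1B)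
      (fun m => hd1dom m) p
    calc S (unionP f1 one1) p
        = S (transpose (transpose (unionP f1 one1))) p :=
          S_congr (fun j hj => (transpose_transpose hU1m hU1B hj).symm) p
      _ ≤ S (transpose d1) p := h
  have hT2 : ∀ p, S f2 p ≤ S (transpose d2) p := by
    intro p
    have h := dom_transpose hd2P.mono hd2B (S_total hd2P hd2B)
      (transpose_bnd h2m h2B) (by
        have : S (transpose f2) (f2 1) = S f2 M := by
          apply S_transpose_total h2B
          intro i hi1 hiM
          exact val_le_top h2m hi1
        rw [this]
        rw [hf2tot]) (fun m => hd2dom m) p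
    calc S f2 p = S (transpose (transpose f2)) p :=
          S_congr (fun j hj => (transpose_transpose h2m h2B hj).symm) p
      _ ≤ S (transpose d2) p := h
  -- main work
  intro p
  have hchar := main_char h1m h1B h2m h2B h1sp h2sp heven2 p
  by_cases hpsi : Psi f1 f2 p
  case neg =>
    have h0 : Sz (xi f1 f2) p = 0 := hchar.2 hpsi
    rw [h0]
    have e1 : S f1 p ≤ S (transpose d1) p :=
      le_trans (S_le_union_one1 h1m h1B p) (hT1 p)
    have e2 : S f2 p ≤ S (transpose d2) p := hT2 p
    push_cast
    omega
  case pos =>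
    have h1 : Sz (xi f1 f2) p = 1 := hchar.1 hpsi
    rw [h1]
    have hp1 : 1 ≤ p := by
      by_contra hc
      have hp0 : p = 0 := by omega
      subst hp0
      obtain ⟨hK, _, _, hO⟩ := hpsi
      rcases hO with ⟨Δ, hI, hOJ⟩ | ⟨Δ, hI, hOJ⟩ <;>
        · obtain ⟨j, hLj, hj0⟩ := hOJ.1
          have := hLj.1.1
          omega
    have e2 : S f2 p ≤ S (transpose d2) p := hT2 p
    -- enough: S f1 p + 1 ≤ S td1 p
    have e1 : S f1 p + 1 ≤ S (transpose d1) p := by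
      rcases Nat.eq_zero_or_pos (f1 p) with hz | hpos
      · have := S_union_one1_of_zero h1m h1B hp1 hz
        have := hT1 p
        omega
      · -- parity / concavity
        have hK1 : Even (f1 p) := hpsi.1.1
        have htd1odd : ∀ k, Odd k → S (transpose d1) k % 2 = 1 := by
          intro k hk
          have := orth_transpose_odd_sum hd1P.mono hd1B hd1o hk
          rw [S_total hd1P hd1B] at this
          omega
        rcases Nat.even_or_odd p with hpe | hpo
        · -- p even : use concavity
          have hp2 : 2 ≤ p := by
            rcases hpe with ⟨w, hw⟩; omega
          obtain ⟨hc1, hc2⟩ := hpsi.2.2.1 hpe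
          have hf1p1 : 1 ≤ f1 (p+1) := by omega
          have hf1pm : 1 ≤ f1 (p-1) := le_trans hpos (h1m (by omega) (by omega))
          -- S f1 even at p, p±1
          have hSfp : Even (S f1 p) := by
            rcases hpe with ⟨w, hw⟩
            have := sp_even_S h1sp w
            rw [show 2*w = p by omega] at this
            exact this
          have hSp1 : S f1 (p+1) = S f1 p + f1 (p+1) := S_succ f1 p
          have hSpm : S f1 p = S f1 (p-1) + f1 p := by
            have := S_succ f1 (p-1)
            rw [show p - 1 + 1 = p by omega] at this
            exact this
          -- lower bounds at p-1 and p+1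
          have hb1 : S f1 (p-1) + 1 ≤ S (transpose d1) (p-1) := by
            have hEq : S (unionP f1 one1) (p-1) = S f1 (p-1) :=
              S_union_one1_of_pos h1m h1B (by omega) hf1pm
            have hle : S f1 (p-1) ≤ S (transpose d1) (p-1) := by
              rw [← hEq]; exact hT1 (p-1)
            have hOddQ : S (transpose d1) (p-1) % 2 = 1 := htd1odd (p-1) (by
              rcases hpe with ⟨w, hw⟩
              exact ⟨w - 1, by omega⟩)
            have hEvenS : Even (S f1 (p-1)) := by
              rw [Nat.even_iff] at hSfp hK1 ⊢
              omega
            rw [Nat.even_iff] at hEvenS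
            omega
          have hb2 : S f1 (p+1) + 1 ≤ S (transpose d1) (p+1) := by
            have hEq : S (unionP f1 one1) (p+1) = S f1 (p+1) :=
              S_union_one1_of_pos h1m h1B (by omega) hf1p1
            have hle : S f1 (p+1) ≤ S (transpose d1) (p+1) := by
              rw [← hEq]; exact hT1 (p+1)
            have hOddQ : S (transpose d1) (p+1) % 2 = 1 := htd1odd (p+1) (by
              rcases hpe with ⟨w, hw⟩
              exact ⟨w, by omega⟩)
            have hEvenS : Even (S f1 (p+1)) := by
              have hK1' : Even (f1 (p+1)) := by rw [← hc1]; exact hK1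
              rw [Nat.even_iff] at hSfp hK1' ⊢
              omega
            rw [Nat.even_iff] at hEvenS
            omega
          -- concavity of S td1
          have hconc : S (transpose d1) (p-1) + S (transpose d1) (p+1)
              ≤ 2 * S (transpose d1) p := by
            have h1' : S (transpose d1) p = S (transpose d1) (p-1) + transpose d1 p := by
              have := S_succ (transpose d1) (p-1)
              rw [show p - 1 + 1 = p by omega] at this
              exact this
            have h2' : S (transpose d1) (p+1) = S (transpose d1) p + transpose d1 (p+1) :=
              S_succ (transpose d1) p
            have h3' : transpose d1 (p+1) ≤ transpose d1 p :=
              transpose_mono d1 hd1B (by omega) (by omega)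
            omega
          omega
        · -- p odd : parity suffices
          have hEq : S (unionP f1 one1) p = S f1 p :=
            S_union_one1_of_pos h1m h1B hp1 hpos
          have hle : S f1 p ≤ S (transpose d1) p := by
            rw [← hEq]; exact hT1 p
          have hOddQ : S (transpose d1) p % 2 = 1 := htd1odd p hpo
          have hEvenS : Even (S f1 p) := by
            have hSpm : S f1 p = S f1 (p-1) + f1 p := by
              have := S_succ f1 (p-1)
              rw [show p - 1 + 1 = p by omega] at this
              exact this
            have hSfpm : Even (S f1 (p-1)) := by
              rcases hpo with ⟨w, hw⟩
              have := sp_even_S h1sp w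
              rw [show 2*w = p - 1 by omega] at this
              exact this
            rw [Nat.even_iff] at hSfpm hK1 ⊢
            omega
          rw [Nat.even_iff] at hEvenS
          omega
    push_cast
    omega
/-! ### Part 8: monotonicity and total of `g` -/

section GFacts
variable {f1 f2 g : ℕ → ℕ} {M : ℕ}

lemma xi_ge (f1 f2 : ℕ → ℕ) (j : ℕ) : -1 ≤ xi f1 f2 j := by
  unfold xi
  split
  · norm_num
  · split <;> norm_num

lemma xi_le (f1 f2 : ℕ → ℕ) (j : ℕ) : xi f1 f2 j ≤ 1 := by
  unfold xi
  split
  · norm_num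
  · split <;> norm_num

lemma xi_vanish (h2B : Bnd f2 M) {j : ℕ} (hj : M < j) : xi f1 f2 j = 0 := by
  apply xi_zero'
  · intro hmem
    have := hmem.2.2.1
    rw [h2B j hj] at this
    simp at this
  · intro hmem
    have := hmem.2.2.1
    rw [h2B j hj] at this
    simp at this

lemma g_bnd (h1B : Bnd f1 M) (h2B : Bnd f2 M)
    (hg : ∀ j, 1 ≤ j → (g j : ℤ) = (f1 j : ℤ) + (f2 j : ℤ) + xi f1 f2 j) :
    Bnd g M := by
  intro j hj
  have h := hg j (by omega)
  rw [h1B j hj, h2B j hj, xi_vanish h2B hj] at h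
  simp at h
  exact_mod_cast h

lemma g_adj (h1m : Mono f1) (h1B : Bnd f1 M) (h2m : Mono f2) (h2B : Bnd f2 M)
    (hg : ∀ j, 1 ≤ j → (g j : ℤ) = (f1 j : ℤ) + (f2 j : ℤ) + xi f1 f2 j)
    {j : ℕ} (hj : 1 ≤ j) : g (j+1) ≤ g j := by
  have key : (f1 (j+1) : ℤ) + f2 (j+1) + xi f1 f2 (j+1) ≤ (f1 j : ℤ) + f2 j + xi f1 f2 j := by
    have hmono1 : f1 (j+1) ≤ f1 j := h1m hj (by omega)
    have hmono2 : f2 (j+1) ≤ f2 j := h2m hj (by omega)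
    by_cases hp : (j+1) ∈ JplusSet f1 f2
    · have hx1 : xi f1 f2 (j+1) = 1 := xi_plus hp
      have hne : ¬ (f1 j = f1 (j+1) ∧ f2 j = f2 (j+1)) := by
        rintro ⟨e1, e2⟩
        rcases hp.2.2.2 with ⟨Δ, hI, hL⟩ | ⟨Δ, hI, hL⟩
        · have hmem : j ∈ Jset f1 Δ := ⟨hj, by rw [e1]; exact hL.1.2⟩
          have := hL.2 hmem
          omega
        · have hmem : j ∈ Jset f2 Δ := ⟨hj, by rw [e2]; exact hL.1.2⟩
          have := hL.2 hmem
          omega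
      by_cases hjp : j ∈ JplusSet f1 f2
      · rw [hx1, xi_plus hjp]
        push_cast
        omega
      · by_cases hjm : j ∈ JminusSet f1 f2
        · rw [hx1, xi_minus hjp hjm]
          have hKj1 : Even (f1 j) := hjm.2.1
          have hKj2 : Odd (f2 j) := hjm.2.2.1
          have hKq1 : Even (f1 (j+1)) := hp.2.1
          have hKq2 : Odd (f2 (j+1)) := hp.2.2.1
          rw [Nat.even_iff] at hKj1 hKq1
          rw [Nat.odd_iff] at hKj2 hKq2
          have : f1 (j+1) + f2 (j+1) + 2 ≤ f1 j + f2 j := by omega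
          push_cast
          omega
        · rw [hx1, xi_zero' hjp hjm]
          have : f1 (j+1) + f2 (j+1) + 1 ≤ f1 j + f2 j := by omega
          push_cast
          omega
    · by_cases hm' : (j+1) ∈ JminusSet f1 f2
      · rw [xi_minus hp hm']
        have := xi_ge f1 f2 j
        push_cast
        omega
      · rw [xi_zero' hp hm']
        by_cases hjm : j ∈ JminusSet f1 f2
        · by_cases hjp : j ∈ JplusSet f1 f2
          · rw [xi_plus hjp]
            push_cast
            omega
          · rw [xi_minus hjp hjm]
            have hne : ¬ (f1 j = f1 (j+1) ∧ f2 j = f2 (j+1)) := by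
              rintro ⟨e1, e2⟩
              rcases hjm.2.2.2 with ⟨Δ, hI, hG⟩ | ⟨Δ, hI, hG⟩
              · have hmem : j + 1 ∈ Jset f1 Δ := ⟨by omega, by rw [← e1]; exact hG.1.2⟩
                have := hG.2 hmem
                omega
              · have hmem : j + 1 ∈ Jset f2 Δ := ⟨by omega, by rw [← e2]; exact hG.1.2⟩
                have := hG.2 hmem
                omega
            have : f1 (j+1) + f2 (j+1) + 1 ≤ f1 j + f2 j := by omega
            push_cast
            omega
        · have h0 : (0:ℤ) ≤ xi f1 f2 j := by
            by_cases hjp : j ∈ JplusSet f1 f2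
            · rw [xi_plus hjp]; norm_num
            · rw [xi_zero' hjp hjm]
          push_cast
          omega
  have h1 := hg j hj
  have h2 := hg (j+1) (by omega)
  have : (g (j+1) : ℤ) ≤ (g j : ℤ) := by rw [h1, h2]; exact key
  exact_mod_cast this

lemma g_mono (h1m : Mono f1) (h1B : Bnd f1 M) (h2m : Mono f2) (h2B : Bnd f2 M)
    (hg : ∀ j, 1 ≤ j → (g j : ℤ) = (f1 j : ℤ) + (f2 j : ℤ) + xi f1 f2 j) :
    Mono g := by
  intro j k hj hjk
  induction k, hjk using Nat.le_induction with
  | base => exact le_refl _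
  | succ k hk ih =>
    exact le_trans (g_adj h1m h1B h2m h2B hg (by omega)) ih

lemma Sg_eq (hg : ∀ j, 1 ≤ j → (g j : ℤ) = (f1 j : ℤ) + (f2 j : ℤ) + xi f1 f2 j) (p : ℕ) :
    (S g p : ℤ) = (S f1 p : ℤ) + (S f2 p : ℤ) + Sz (xi f1 f2) p := by
  unfold S Sz
  push_cast
  rw [← Finset.sum_add_distrib, ← Finset.sum_add_distrib]
  apply Finset.sum_congr rfl
  intro j hjm
  simp only [Finset.mem_Icc] at hjm
  exact hg j hjm.1

end GFacts
/-- Proposition 1.9: `d(λ1) ∪ d(λ2) ≤ d(ind(λ1, λ2))`. -/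
theorem stmt3 (n1 n2 : ℕ)
    (f1 : ℕ → ℕ) (h1 : IsPartition f1 (2*n1)) (h1s : Symp f1) (h1sp : SpecialPairs f1)
    (f2 : ℕ → ℕ) (h2 : IsPartition f2 (2*n2)) (h2o : Orth f2) (h2sp : SpecialPairs f2)
    (g : ℕ → ℕ)
    (hg : ∀ j, 1 ≤ j → (g j : ℤ) = (f1 j : ℤ) + (f2 j : ℤ) + xi f1 f2 j)
    (d1 d2 dg : ℕ → ℕ)
    (hd1 : IsSympDual d1 n1 f1) (hd2 : IsOrthDual d2 n2 f2)
    (hdg : IsSympDual dg (n1+n2) g) :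
    Dom (unionP d1 d2) dg := by
  obtain ⟨⟨hd1P, hd1o, hd1dom⟩, -⟩ := hd1
  obtain ⟨⟨hd2P, hd2o, hd2dom⟩, -⟩ := hd2
  obtain ⟨-, hdgmax⟩ := hdg
  -- a common index bound
  obtain ⟨m1, hm1⟩ := h1.fin
  obtain ⟨m2, hm2⟩ := h2.fin
  obtain ⟨m3, hm3⟩ := hd1P.fin
  obtain ⟨m4, hm4⟩ := hd2P.fin
  set M := m1 + m2 + m3 + m4 + 1 with hM
  have h1B : Bnd f1 M := fun j hj => hm1 j (by omega)
  have h2B : Bnd f2 M := fun j hj => hm2 j (by omega)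
  have hd1B : Bnd d1 M := fun j hj => hm3 j (by omega)
  have hd2B : Bnd d2 M := fun j hj => hm4 j (by omega)
  have h1m : Mono f1 := h1.mono
  have h2m : Mono f2 := h2.mono
  have hf1tot : S f1 M = 2*n1 := S_total h1 h1B
  have hf2tot : S f2 M = 2*n2 := S_total h2 h2B
  have heven2 : Even ((OddSet f2).ncard) :=
    oddset_even_card_orth h2m h2B h2o (by rw [hf2tot]; exact ⟨n2, by ring⟩)
  -- facts about g
  have hBg : Bnd g M := g_bnd h1B h2B hg
  have hgm : Mono g := g_mono h1m h1B h2m h2B hg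
  have hSzM : Sz (xi f1 f2) M = 0 := by
    apply (main_char h1m h1B h2m h2B h1sp h2sp heven2 M).2
    intro hpsi
    have := hpsi.1.2
    rw [hm2 M (by omega)] at this
    simp at this
  have hgtot : S g M = 2*(n1+n2) := by
    have h := Sg_eq hg M
    rw [hSzM, hf1tot, hf2tot] at h
    have hzz : (S g M : ℤ) = ((2*(n1+n2) : ℕ) : ℤ) := by rw [h]; push_cast; ring
    exact_mod_cast hzz
  -- the candidate partition ν = d1 ∪ d2, as transpose of w
  set w : ℕ → ℕ := fun i => transpose d1 i + transpose d2 i with hw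
  have hν : unionP d1 d2 = transpose w := rfl
  have hmw : Mono w := by
    intro j k hj hjk
    exact Nat.add_le_add (transpose_mono d1 hd1B hj hjk) (transpose_mono d2 hd2B hj hjk)
  set W := d1 1 + d2 1 + M + 1 with hW
  have hBw : Bnd w W := by
    intro i hi
    have e1 := transpose_bnd hd1P.mono hd1B i (by omega)
    have e2 := transpose_bnd hd2P.mono hd2B i (by omega)
    simp only [hw, e1, e2]
  have hSwW : S w W = 2*(n1+n2)+1 := by
    rw [hw, S_add]
    have e1 : S (transpose d1) W = S d1 M :=
      S_transpose_total hd1B (fun i hi1 _ => by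
        have := val_le_top hd1P.mono hi1
        omega)
    have e2 : S (transpose d2) W = S d2 M :=
      S_transpose_total hd2B (fun i hi1 _ => by
        have := val_le_top hd2P.mono hi1
        omega)
    rw [e1, e2, S_total hd1P hd1B, S_total hd2P hd2B]
    ring
  have hνP : IsPartition (unionP d1 d2) (2*(n1+n2)+1) := by
    rw [hν, ← hSwW]
    exact partition_transpose hmw hBw
  have hνo : Orth (unionP d1 d2) := by
    intro i hie hi1
    have hBν : Bnd (transpose w) (w 1) := transpose_bnd hmw hBw
    have e1 : transpose d1 i = transpose d1 (i+1) + mult d1 i := transpose_split hd1B hi1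
    have e2 : transpose d2 i = transpose d2 (i+1) + mult d2 i := transpose_split hd2B hi1
    have e3 : transpose (transpose w) i = transpose (transpose w) (i+1) + mult (transpose w) i :=
      transpose_split hBν hi1
    rw [transpose_transpose hmw hBw hi1, transpose_transpose hmw hBw (by omega)] at e3
    have hmult : mult (unionP d1 d2) i = mult d1 i + mult d2 i := by
      rw [hν]
      have ew1 : w i = transpose d1 i + transpose d2 i := rfl
      have ew2 : w (i+1) = transpose d1 (i+1) + transpose d2 (i+1) := rfl
      omega
    rw [hmult]
    exact Even.add (hd1o i hie hi1) (hd2o i hie hi1)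
  -- dominance over the target
  have hνdom : Dom (unionP d1 d2) (transpose (unionP g one1)) := by
    intro k
    rcases Nat.eq_zero_or_pos k with rfl | hk
    · rw [S_zero, S_zero]
    -- the target: transpose (unionP g one1) agrees with transpose g + one1
    have hmu : Mono (fun i => transpose g i + transpose one1 i) := by
      intro j k' hj hjk
      exact Nat.add_le_add (transpose_mono g hBg hj hjk) (transpose_mono one1 bnd_one1 hj hjk)
    have hBu : Bnd (fun i => transpose g i + transpose one1 i) (g 1 + 1) := by
      intro i hi
      have e1 := transpose_bnd hgm hBg i (by omega)
      have e2 := bnd_one1 i (by omega)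
      rw [transpose_one1]
      simp only [e1, e2]
    have hTg : ∀ j, 1 ≤ j →
        transpose (unionP g one1) j = transpose g j + transpose one1 j := by
      intro j hj
      exact transpose_transpose hmu hBu hj
    have hTgS : S (transpose (unionP g one1)) k = S (transpose g) k + 1 := by
      rw [S_congr (fun j hj => hTg j hj) k, S_add]
      congr 1
      rw [transpose_one1]
      have : S one1 k = S one1 1 := S_stable bnd_one1 hk
      rw [this]
      rfl
    -- choose p
    set p := transpose g k with hp
    have hpM : p ≤ M := transpose_le_index_bound hBg hk
    have hpW : p ≤ W := by omega
    have hub : S (unionP d1 d2) k ≤ p * k + (S w W - S w p) := by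
      rw [hν]
      exact S_transpose_ub hBw k hpW
    have hlb : p * k + (S g M - S g p) ≤ S (transpose g) k := S_transpose_lb hgm hBg hk
    -- club
    have hclub := club h1m h1B h1sp h2m h2B h2sp heven2
      hd1P hd1B hd1o hd1dom hd2P hd2B hd2o hd2dom hf1tot hf2tot p
    have hSgp : (S g p : ℤ) = (S f1 p : ℤ) + (S f2 p : ℤ) + Sz (xi f1 f2) p := Sg_eq hg p
    have hgw : S g p ≤ S w p := by
      have : (S g p : ℤ) ≤ ((S (transpose d1) p + S (transpose d2) p : ℕ) : ℤ) := by
        rw [hSgp]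
        push_cast at hclub ⊢
        linarith
      have h2' : S g p ≤ S (transpose d1) p + S (transpose d2) p := by exact_mod_cast this
      rw [hw, S_add]
      exact h2'
    have hwp_le : S w p ≤ S w W := by
      rcases le_or_gt p W with h | h
      · exact S_mono_k w h
      · omega
    have hgp_le : S g p ≤ S g M := by
      rcases le_or_gt p M with h | h
      · exact S_mono_k g h
      · omega
    rw [hTgS]
    rw [hSwW] at hub hwp_le
    rw [hgtot] at hlb hgp_le
    omega
  exact hdgmax (unionP d1 d2) hνP hνo hνdom
end Wald
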